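/- arXiv:1712.07915 — 9 statements merged into one kernel-verified Lean document; each statement's English description precedes it below -/
import Mathlib

section
/- For every real number η and every ε > 0, it holds that 0 ≤ |η| − η·tanh(η/ε) < 0.2785·ε, where tanh is the hyperbolic tangent function. -/
private theorem key_ineq (t : ℝ) (ht : 0 ≤ t) : t < 0.2785 * (Real.exp t + 1) := by
  have h := Real.sum_le_exp_of_nonneg ht 8
  simp [Finset.sum_range_succ, Nat.factorial] at h
  norm_num at h ⊢
  nlinarith [sq_nonneg (t - 63937/50000),
    mul_nonneg ht (sq_nonneg (t - 63937/50000)),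
    mul_nonneg (mul_nonneg ht ht) (sq_nonneg (t - 63937/50000)),
    mul_nonneg (mul_nonneg (mul_nonneg ht ht) ht) (sq_nonneg (t - 63937/50000)),
    mul_nonneg (mul_nonneg (mul_nonneg (mul_nonneg ht ht) ht) ht) (sq_nonneg (t - 63937/50000)),
    mul_nonneg (mul_nonneg (mul_nonneg (mul_nonneg (mul_nonneg ht ht) ht) ht) ht) (sq_nonneg (t - 63937/50000))]

private theorem tanh_formula (x : ℝ) : Real.tanh x = (Real.exp (2*x) - 1) / (Real.exp (2*x) + 1) := by
  rw [Real.tanh_eq_sinh_div_cosh, Real.sinh_eq, Real.cosh_eq]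
  have h1 : Real.exp x ≠ 0 := Real.exp_ne_zero x
  have h2 : Real.exp x + Real.exp (-x) ≠ 0 := by positivity
  have h3 : Real.exp (2*x) + 1 ≠ 0 := by positivity
  have e2 : Real.exp (2*x) = Real.exp x * Real.exp x := by
    rw [two_mul, Real.exp_add]
  have en : Real.exp (-x) = (Real.exp x)⁻¹ := Real.exp_neg x
  field_simp [e2, en]
  have e2' : Real.exp (x*2) = Real.exp x * Real.exp x := by rw [mul_comm, e2]
  have hab : Real.exp x * Real.exp (-x) = 1 := by rw [en]; exact mul_inv_cancel₀ h1
  linear_combination (-2 * Real.exp (-x)) * e2' + (-2 * Real.exp x) * hab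

private theorem half_est (η ε : ℝ) (hη : 0 ≤ η) (hε : 0 < ε) :
    η - η * Real.tanh (η / ε) < 0.2785 * ε := by
  set E := Real.exp (2 * (η / ε)) with hE
  have hEpos : 0 < E := Real.exp_pos _
  have hkey := key_ineq (2 * (η / ε)) (by positivity)
  rw [← hE] at hkey
  have ht := tanh_formula (η / ε)
  rw [← hE] at ht
  rw [ht]
  have hne : E + 1 ≠ 0 := by positivity
  have : η - η * ((E - 1) / (E + 1)) = 2 * η / (E + 1) := by
      field_simp
      ring
  rw [this, div_lt_iff₀ (by positivity : (0:ℝ) < E + 1)]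
  have h2 : 2 * η = (2 * (η / ε)) * ε := by field_simp
  nlinarith [mul_lt_mul_of_pos_right hkey hε]

private theorem abs_tanh_lt_one' (x : ℝ) : |Real.tanh x| < 1 := by
  rw [tanh_formula x]
  have hEpos : 0 < Real.exp (2*x) := Real.exp_pos _
  rw [abs_div, abs_of_pos (by positivity : (0:ℝ) < Real.exp (2*x) + 1),
    div_lt_one (by positivity : (0:ℝ) < Real.exp (2*x) + 1), abs_lt]
  constructor <;> linarith

theorem tanh_scalar_estimate (η ε : ℝ) (hε : 0 < ε) :
    0 ≤ |η| - η * Real.tanh (η / ε) ∧ |η| - η * Real.tanh (η / ε) < 0.2785 * ε := by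
  constructor
  · have h1 : η * Real.tanh (η / ε) ≤ |η * Real.tanh (η / ε)| := le_abs_self _
    have h2 : |η * Real.tanh (η / ε)| ≤ |η| := by
      rw [abs_mul]
      have := abs_tanh_lt_one' (η / ε)
      nlinarith [abs_nonneg η, abs_nonneg (Real.tanh (η / ε))]
    linarith
  · rcases le_or_gt 0 η with h | h
    · rw [abs_of_nonneg h]; exact half_est η ε h hε
    · rw [abs_of_neg h]
      have := half_est (-η) ε (by linarith) hε
      rw [neg_div, Real.tanh_neg] at this
      linarith [this]
end

section
/- Let N ≥ 2 and let D ∈ ℝ^{N×m} be a matrix each of whose columns sums to zero (such as the incidence matrix of an oriented connected undirected graph on N vertices with m edges), and let λ > 0 be a constant such that eᵀ(D Dᵀ)e ≥ λ‖e‖₂² for every e ∈ ℝ^N with Σᵢ eᵢ = 0 (for the incidence matrix of a connected graph, λ can be taken to be the second-smallest eigenvalue λ₂(L) of the Laplacian L = D Dᵀ). Let Π = I_N − (1/N)𝟏𝟏ᵀ. Let β₁, β₂ > 0 and ω₀ ≥ 0 satisfy β₁·√λ > ω₀. Let Ω : [0,∞) → ℝ^N be continuous with ‖Π Ω(t)‖₂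 ≤ ω₀ for all t ≥ 0, and let x : [0,∞) → ℝ^N be continuously differentiable and satisfy ẋ(t) = −β₁ D tanh(β₂ Dᵀ x(t)) + Ω(t) for all t ≥ 0, where tanh acts componentwise. Then for every ρ > (0.2785·β₁·m/β₂)/(β₁·√λ − ω₀) there exists T ≥ 0 such that ‖Π x(t)‖₂ ≤ ρ for all t ≥ T; in particular |x_i(t) − x_j(t)| ≤ 2ρ for all indices i, j and all t ≥ T, i.e. the agents achieve practical consensus. -/
lemma pc_exp_line (u : ℝ) : (2000/557) * u - 1 ≤ Real.exp u := by
  have h1 : Real.exp (2557/2000 : ℝ) ≥ 2000/557 := by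
    have h := Real.sum_le_exp_of_nonneg (x := (2557/2000 : ℝ)) (by norm_num) 10
    refine le_trans ?_ h
    simp only [Finset.sum_range_succ, Finset.sum_range_zero, Nat.factorial]
    norm_num
  set u₀ : ℝ := Real.log (2000/557) with hu₀
  have hu₀le : u₀ ≤ 2557/2000 := by
    rw [hu₀, Real.log_le_iff_le_exp (by norm_num)]
    exact h1
  have h2 : (u - u₀) + 1 ≤ Real.exp (u - u₀) := Real.add_one_le_exp _
  have h3 : Real.exp u = Real.exp u₀ * Real.exp (u - u₀) := by
    rw [← Real.exp_add]; ring_nf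
  have h4 : Real.exp u₀ = 2000/557 := Real.exp_log (by norm_num)
  have h5 : (2000/557:ℝ) * ((u - u₀) + 1) ≤ Real.exp u := by
    rw [h3, h4]; exact mul_le_mul_of_nonneg_left h2 (by norm_num)
  linarith

lemma pc_key_w (w : ℝ) : 2*w ≤ 0.2785 * (Real.exp (2*w) + 1) := by
  have := pc_exp_line (2*w)
  nlinarith

lemma pc_tanh_ratio (t : ℝ) :
    Real.tanh t = (Real.exp (2*t) - 1) / (Real.exp (2*t) + 1) := by
  rw [Real.tanh_eq_sinh_div_cosh, Real.sinh_eq, Real.cosh_eq]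
  have h : Real.exp (2*t) = Real.exp t * Real.exp t := by
    rw [← Real.exp_add]; ring_nf
  have h1 := Real.exp_pos t
  have h2 := Real.exp_pos (-t)
  have h3 : Real.exp t * Real.exp (-t) = 1 := by
    rw [← Real.exp_add]; simp
  field_simp
  rw [show t * 2 = 2 * t by ring, h]
  linear_combination (-2 * Real.exp t) * h3

lemma pc_tanh_lb_nonneg (b z : ℝ) (hb : 0 < b) (hz : 0 ≤ z) :
    z - 0.2785/b ≤ z * Real.tanh (b*z) := by
  rw [pc_tanh_ratio]
  set E := Real.exp (2*(b*z)) with hE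
  have hEpos : 0 < E := Real.exp_pos _
  have hk : 2*(b*z) ≤ 0.2785 * (E + 1) := pc_key_w (b*z)
  have h6 : z * ((E - 1) / (E + 1)) - (z - 0.2785/b)
      = (0.2785*(E+1) - 2*b*z)/(b*(E+1)) := by
    field_simp
    ring
  have h7 : 0 ≤ (0.2785*(E+1) - 2*b*z)/(b*(E+1)) :=
    div_nonneg (by linarith) (by positivity)
  linarith [h6 ▸ h7]

lemma pc_tanh_lb (b z : ℝ) (hb : 0 < b) : |z| - 0.2785/b ≤ z * Real.tanh (b*z) := by
  rcases le_total 0 z with hz | hz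
  · rw [abs_of_nonneg hz]; exact pc_tanh_lb_nonneg b z hb hz
  · rw [abs_of_nonpos hz]
    have := pc_tanh_lb_nonneg b (-z) hb (by linarith)
    rw [mul_neg, Real.tanh_neg] at this
    linarith [this]

lemma pc_swap (N m : ℕ) (D : Matrix (Fin N) (Fin m) ℝ) (et : Fin N → ℝ) (T : Fin m → ℝ) :
    ∑ i, et i * ∑ k, D i k * T k = ∑ k, (∑ i, et i * D i k) * T k := by
  simp_rw [Finset.mul_sum, Finset.sum_mul]
  rw [Finset.sum_comm]
  exact Finset.sum_congr rfl fun k _ => Finset.sum_congr rfl fun i _ => by ring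

lemma pc_dot (N m : ℕ) (D : Matrix (Fin N) (Fin m) ℝ) (e : Fin N → ℝ) :
    dotProduct e ((D * D.transpose).mulVec e) = ∑ k, (∑ i, D i k * e i)^2 := by
  rw [← Matrix.mulVec_mulVec, Matrix.dotProduct_mulVec]
  simp [Matrix.vecMul, Matrix.mulVec, dotProduct, Matrix.transpose_apply, sq,
    mul_comm]

lemma pc_sqrt_le_sum_abs (m : ℕ) (y : Fin m → ℝ) :
    Real.sqrt (∑ k, (y k)^2) ≤ ∑ k, |y k| := by
  have h1 : ∑ k, (y k)^2 ≤ (∑ k, |y k|)^2 := by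
    calc ∑ k, (y k)^2 = ∑ k, |y k|^2 := by simp [sq_abs]
    _ ≤ (∑ k, |y k|)^2 := Finset.sum_sq_le_sq_sum_of_nonneg fun i _ => abs_nonneg _
  calc Real.sqrt (∑ k, (y k)^2) ≤ Real.sqrt ((∑ k, |y k|)^2) := Real.sqrt_le_sqrt h1
  _ = ∑ k, |y k| := Real.sqrt_sq (Finset.sum_nonneg fun i _ => abs_nonneg _)

/-- Practical consensus for single-integrator agents under the tanh protocol
with a bounded projected drift. -/
theorem practical_consensus_single_integrator
    (N m : ℕ) (hN : 2 ≤ N)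
    (D : Matrix (Fin N) (Fin m) ℝ)
    (hDcol : ∀ k : Fin m, ∑ i, D i k = 0)
    (lam : ℝ) (hlam : 0 < lam)
    (hspec : ∀ e : Fin N → ℝ, (∑ i, e i) = 0 →
      lam * ∑ i, (e i) ^ 2 ≤ dotProduct e ((D * D.transpose).mulVec e))
    (β₁ β₂ ω₀ : ℝ) (hβ₁ : 0 < β₁) (hβ₂ : 0 < β₂) (hω₀ : 0 ≤ ω₀)
    (hgain : ω₀ < β₁ * Real.sqrt lam)
    (Ω : ℝ → Fin N → ℝ)
    (hΩcont : ContinuousOn Ω (Set.Ici 0))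
    (hΩbd : ∀ t : ℝ, 0 ≤ t →
      Real.sqrt (∑ i, (Ω t i - (∑ j, Ω t j) / N) ^ 2) ≤ ω₀)
    (x : ℝ → Fin N → ℝ)
    (hx : ∀ t : ℝ, 0 ≤ t → ∀ i : Fin N,
      HasDerivAt (fun s => x s i)
        (-β₁ * ∑ k, D i k * Real.tanh (β₂ * ∑ j, D j k * x t j) + Ω t i) t) :
    ∀ ρ : ℝ, (0.2785 * β₁ * m / β₂) / (β₁ * Real.sqrt lam - ω₀) < ρ →
      ∃ T : ℝ, 0 ≤ T ∧ ∀ t : ℝ, T ≤ t →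
        Real.sqrt (∑ i, (x t i - (∑ j, x t j) / N) ^ 2) ≤ ρ ∧
        ∀ i j : Fin N, |x t i - x t j| ≤ 2 * ρ := by
  intro ρ hρ
  have hNR : (0:ℝ) < N := by
    have : (2:ℝ) ≤ N := by exact_mod_cast hN
    linarith
  set a : ℝ := β₁ * Real.sqrt lam - ω₀ with ha_def
  have ha : 0 < a := by rw [ha_def]; linarith
  set c : ℝ := 0.2785 * β₁ * m / β₂ with hc_def
  have hc : 0 ≤ c := by rw [hc_def]; positivity
  have hρ' : c / a < ρ := hρ
  have hρpos : 0 < ρ := lt_of_le_of_lt (div_nonneg hc ha.le) hρ'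
  have hca : c < a * ρ := by
    rw [div_lt_iff₀ ha] at hρ'
    linarith
  set δ : ℝ := 2 * (a * ρ - c) with hδ_def
  have hδ : 0 < δ := by rw [hδ_def]; linarith
  set e : ℝ → Fin N → ℝ := fun t i => x t i - (∑ j, x t j) / N with he_def
  set u : ℝ → Fin N → ℝ := fun t i =>
    -β₁ * ∑ k, D i k * Real.tanh (β₂ * ∑ j, D j k * x t j) + Ω t i with hu_def
  set V : ℝ → ℝ := fun t => ∑ i, e t i ^ 2 with hV_def
  have he0 : ∀ t, ∑ i, e t i = 0 := by
    intro t
    simp only [he_def]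
    rw [Finset.sum_sub_distrib, Finset.sum_const, Finset.card_univ, Fintype.card_fin,
      nsmul_eq_mul]
    field_simp
    ring
  have hV0 : ∀ t, 0 ≤ V t := by
    intro t
    simp only [hV_def]
    exact Finset.sum_nonneg fun i _ => sq_nonneg _
  -- the derivative of V
  have hVd : ∀ t, 0 ≤ t → HasDerivAt V (2 * ∑ i, e t i * u t i) t := by
    intro t ht
    simp only [hV_def, hu_def, he_def]
    have hxi : ∀ i : Fin N, HasDerivAt (fun s => x s i)
        (-β₁ * ∑ k, D i k * Real.tanh (β₂ * ∑ j, D j k * x t j) + Ω t i) t :=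
      fun i => hx t ht i
    set w : Fin N → ℝ := fun i =>
      -β₁ * ∑ k, D i k * Real.tanh (β₂ * ∑ j, D j k * x t j) + Ω t i with hw_def
    have hsum : HasDerivAt (fun s => ∑ j, x s j) (∑ j, w j) t :=
      HasDerivAt.fun_sum fun j _ => hxi j
    have havg : HasDerivAt (fun s => (∑ j, x s j) / (N:ℝ)) ((∑ j, w j) / N) t :=
      hsum.div_const _
    have hei : ∀ i : Fin N, HasDerivAt (fun s => x s i - (∑ j, x s j) / N)
        (w i - (∑ j, w j) / N) t := fun i => (hxi i).sub havg
    have hsq : ∀ i : Fin N, HasDerivAt (fun s => (x s i - (∑ j, x s j) / N) ^ 2)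
        (2 * (x t i - (∑ j, x t j) / N) * (w i - (∑ j, w j) / N)) t := by
      intro i
      have h : HasDerivAt (fun s => (x s i - (∑ j, x s j) / N) ^ 2)
          (((2:ℕ):ℝ) * (x t i - (∑ j, x t j) / N) ^ (2 - 1) * (w i - (∑ j, w j) / N)) t :=
        (hei i).fun_pow 2
      convert h using 1
      push_cast
      ring
    have hVsum : HasDerivAt (fun s => ∑ i, (x s i - (∑ j, x s j) / N) ^ 2)
        (∑ i, 2 * (x t i - (∑ j, x t j) / N) * (w i - (∑ j, w j) / N)) t :=
      HasDerivAt.fun_sum fun i _ => hsq i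
    convert hVsum using 1
    have h0 := he0 t
    simp only [he_def] at h0
    have hexp : ∑ i, 2 * (x t i - (∑ j, x t j) / N) * (w i - (∑ j, w j) / N)
        = 2 * (∑ i, (x t i - (∑ j, x t j) / N) * w i)
          - 2 * ((∑ j, w j) / N) * ∑ i, (x t i - (∑ j, x t j) / N) := by
      rw [Finset.mul_sum, Finset.mul_sum, ← Finset.sum_sub_distrib]
      exact Finset.sum_congr rfl fun i _ => by ring
    rw [hexp, h0, mul_zero, sub_zero]
  -- the derivative bound
  have hbd : ∀ t, 0 ≤ t → ρ ^ 2 ≤ V t → 2 * ∑ i, e t i * u t i ≤ -δ := by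
    intro t ht hVt
    set y : Fin m → ℝ := fun k => ∑ j, D j k * x t j with hy_def
    have hyk : ∀ k, ∑ i, e t i * D i k = y k := by
      intro k
      simp only [he_def, hy_def]
      have h1 : ∑ i, (x t i - (∑ j, x t j) / N) * D i k
          = ∑ i, x t i * D i k - (∑ j, x t j) / N * ∑ i, D i k := by
        rw [Finset.mul_sum, ← Finset.sum_sub_distrib]
        exact Finset.sum_congr rfl fun i _ => by ring
      rw [h1, hDcol k, mul_zero, sub_zero]
      exact Finset.sum_congr rfl fun i _ => mul_comm _ _
    have hsplit : ∑ i, e t i * u t i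
        = -β₁ * ∑ k, y k * Real.tanh (β₂ * y k) + ∑ i, e t i * Ω t i := by
      have h1 : ∀ i, e t i * u t i
          = -β₁ * (e t i * ∑ k, D i k * Real.tanh (β₂ * y k)) + e t i * Ω t i := by
        intro i
        simp only [hu_def, hy_def]
        ring
      rw [Finset.sum_congr rfl fun i _ => h1 i, Finset.sum_add_distrib]
      congr 1
      rw [← Finset.mul_sum, pc_swap N m D (e t) (fun k => Real.tanh (β₂ * y k))]
      congr 1
      exact Finset.sum_congr rfl fun k _ => by rw [hyk k]
    have htanh : (∑ k, |y k|) - m * (0.2785 / β₂) ≤ ∑ k, y k * Real.tanh (β₂ * y k) := by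
      have hle : ∀ k ∈ Finset.univ, |y k| - 0.2785 / β₂ ≤ y k * Real.tanh (β₂ * y k) :=
        fun k _ => pc_tanh_lb β₂ (y k) hβ₂
      calc (∑ k, |y k|) - m * (0.2785 / β₂)
          = ∑ k : Fin m, (|y k| - 0.2785 / β₂) := by
            rw [Finset.sum_sub_distrib, Finset.sum_const, Finset.card_univ,
              Fintype.card_fin, nsmul_eq_mul]
        _ ≤ _ := Finset.sum_le_sum hle
    have hspec' : lam * V t ≤ ∑ k, (y k) ^ 2 := by
      have h := hspec (e t) (he0 t)
      rw [pc_dot] at h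
      simp only [hV_def]
      calc lam * ∑ i, e t i ^ 2 ≤ ∑ k, (∑ i, D i k * e t i) ^ 2 := h
        _ = ∑ k, (y k) ^ 2 := by
            refine Finset.sum_congr rfl fun k _ => ?_
            rw [show (∑ i, D i k * e t i) = y k from by
              rw [← hyk k]; exact Finset.sum_congr rfl fun i _ => mul_comm _ _]
    have hsV : ρ ≤ Real.sqrt (V t) := (Real.le_sqrt hρpos.le (hV0 t)).2 hVt
    have hyV : Real.sqrt lam * Real.sqrt (V t) ≤ ∑ k, |y k| := by
      have h1 : Real.sqrt (lam * V t) ≤ Real.sqrt (∑ k, (y k) ^ 2) :=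
        Real.sqrt_le_sqrt hspec'
      rw [Real.sqrt_mul hlam.le] at h1
      exact h1.trans (pc_sqrt_le_sum_abs m y)
    have hOm : ∑ i, e t i * Ω t i ≤ ω₀ * Real.sqrt (V t) := by
      have h1 : ∑ i, e t i * Ω t i = ∑ i, e t i * (Ω t i - (∑ j, Ω t j) / N) := by
        have h2 : ∑ i, e t i * (Ω t i - (∑ j, Ω t j) / N)
            = ∑ i, e t i * Ω t i - (∑ j, Ω t j) / N * ∑ i, e t i := by
          rw [Finset.mul_sum, ← Finset.sum_sub_distrib]
          exact Finset.sum_congr rfl fun i _ => by ring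
        rw [h2, he0 t, mul_zero, sub_zero]
      have h2 := Real.sum_mul_le_sqrt_mul_sqrt Finset.univ (e t)
        (fun i => Ω t i - (∑ j, Ω t j) / N)
      have h3 := hΩbd t ht
      have h4 : Real.sqrt (∑ i, e t i ^ 2) = Real.sqrt (V t) := by rw [hV_def]
      rw [h1]
      calc ∑ i, e t i * (Ω t i - (∑ j, Ω t j) / N)
          ≤ Real.sqrt (∑ i, e t i ^ 2) *
            Real.sqrt (∑ i, (Ω t i - (∑ j, Ω t j) / N) ^ 2) := h2
        _ ≤ Real.sqrt (V t) * ω₀ := by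
            rw [h4]
            exact mul_le_mul_of_nonneg_left h3 (Real.sqrt_nonneg _)
        _ = ω₀ * Real.sqrt (V t) := mul_comm _ _
    have hP : Real.sqrt lam * Real.sqrt (V t) - m * (0.2785 / β₂)
        ≤ ∑ k, y k * Real.tanh (β₂ * y k) := le_trans (by linarith) htanh
    have hcid : β₁ * ((m:ℝ) * (0.2785 / β₂)) = c := by
      rw [hc_def]; field_simp
    have key : β₁ * (Real.sqrt lam * Real.sqrt (V t)) - c
        ≤ β₁ * ∑ k, y k * Real.tanh (β₂ * y k) := by
      have h := mul_le_mul_of_nonneg_left hP hβ₁.le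
      calc β₁ * (Real.sqrt lam * Real.sqrt (V t)) - c
          = β₁ * (Real.sqrt lam * Real.sqrt (V t) - m * (0.2785 / β₂)) := by
            rw [← hcid]; ring
        _ ≤ _ := h
    have key2 : a * ρ ≤ β₁ * (Real.sqrt lam * Real.sqrt (V t)) - ω₀ * Real.sqrt (V t) := by
      calc a * ρ ≤ a * Real.sqrt (V t) := mul_le_mul_of_nonneg_left hsV ha.le
        _ = β₁ * (Real.sqrt lam * Real.sqrt (V t)) - ω₀ * Real.sqrt (V t) := by
            rw [ha_def]; ring
    rw [hsplit, hδ_def]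
    nlinarith [key, key2, hOm]
  -- decrease lemma
  have hps : ∀ s : ℝ, 0 ≤ s →
      HasDerivAt (fun r => V r + δ * r) (2 * (∑ i, e s i * u s i) + δ) s := by
    intro s hs
    exact (hVd s hs).add (by simpa using (hasDerivAt_id s).const_mul δ)
  have hdec : ∀ p q : ℝ, 0 ≤ p → p ≤ q →
      (∀ s, p < s → s < q → ρ ^ 2 ≤ V s) → V q + δ * q ≤ V p + δ * p := by
    intro p q hp hpq hmid
    have hant : AntitoneOn (fun r => V r + δ * r) (Set.Icc p q) := by
      apply antitoneOn_of_deriv_nonpos (convex_Icc p q)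
      · intro s hs
        exact (hps s (le_trans hp hs.1)).continuousAt.continuousWithinAt
      · intro s hs
        rw [interior_Icc] at hs
        exact (hps s (le_trans hp hs.1.le)).differentiableAt.differentiableWithinAt
      · intro s hs
        rw [interior_Icc] at hs
        have hs0 : 0 ≤ s := le_trans hp hs.1.le
        rw [(hps s hs0).deriv]
        have := hbd s hs0 (hmid s hs.1 hs.2)
        linarith
    exact hant (Set.left_mem_Icc.2 hpq) (Set.right_mem_Icc.2 hpq) hpq
  -- invariance
  have hinv : ∀ t₀, 0 ≤ t₀ → V t₀ ≤ ρ ^ 2 → ∀ t, t₀ ≤ t → V t ≤ ρ ^ 2 := by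
    intro t₀ ht₀ hV₀ t ht
    by_contra hVt
    push_neg at hVt
    set S : Set ℝ := Set.Icc t₀ t ∩ V ⁻¹' Set.Iic (ρ ^ 2) with hS_def
    have hSne : S.Nonempty := ⟨t₀, ⟨le_refl _, ht⟩, hV₀⟩
    have hSbdd : BddAbove S := ⟨t, fun s hs => hs.1.2⟩
    have hScl : IsClosed S := by
      have hVcont : ContinuousOn V (Set.Icc t₀ t) := fun s hs =>
        ((hVd s (le_trans ht₀ hs.1)).continuousAt).continuousWithinAt
      exact hVcont.preimage_isClosed_of_isClosed isClosed_Icc isClosed_Iic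
    have hs₀S : sSup S ∈ S := hScl.csSup_mem hSne hSbdd
    have hs₀t : sSup S ≤ t := hs₀S.1.2
    have hs₀lt : sSup S < t := lt_of_le_of_ne hs₀t (fun heq =>
      absurd (heq ▸ hs₀S.2) (not_le.2 hVt))
    have hmid : ∀ s, sSup S < s → s < t → ρ ^ 2 ≤ V s := by
      intro s h1 h2
      by_contra hcon
      push_neg at hcon
      have hsS : s ∈ S := ⟨⟨le_trans hs₀S.1.1 h1.le, h2.le⟩, hcon.le⟩
      exact absurd (le_csSup hSbdd hsS) (not_le.2 h1)
    have hd := hdec (sSup S) t (le_trans ht₀ hs₀S.1.1) hs₀t hmid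
    have hVs₀ : V (sSup S) ≤ ρ ^ 2 := hs₀S.2
    nlinarith [mul_lt_mul_of_pos_left hs₀lt hδ]
  -- main case split
  by_cases hex : ∃ t₀, 0 ≤ t₀ ∧ V t₀ ≤ ρ ^ 2
  · obtain ⟨t₀, ht₀, hV₀⟩ := hex
    refine ⟨t₀, ht₀, ?_⟩
    intro t ht
    have hVt : V t ≤ ρ ^ 2 := hinv t₀ ht₀ hV₀ t ht
    have hsqrt : Real.sqrt (∑ i, (x t i - (∑ j, x t j) / N) ^ 2) ≤ ρ := by
      have h1 : Real.sqrt (V t) ≤ ρ := by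
        calc Real.sqrt (V t) ≤ Real.sqrt (ρ ^ 2) := Real.sqrt_le_sqrt hVt
          _ = ρ := Real.sqrt_sq hρpos.le
      simpa only [hV_def, he_def] using h1
    refine ⟨hsqrt, ?_⟩
    intro i j
    have habs : ∀ i : Fin N, |x t i - (∑ j, x t j) / N| ≤ ρ := by
      intro i
      have h1 : (x t i - (∑ j, x t j) / N) ^ 2
          ≤ ∑ i, (x t i - (∑ j, x t j) / N) ^ 2 :=
        Finset.single_le_sum (f := fun i => (x t i - (∑ j, x t j) / N) ^ 2)
          (fun i _ => sq_nonneg _) (Finset.mem_univ i)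
      calc |x t i - (∑ j, x t j) / N|
          = Real.sqrt ((x t i - (∑ j, x t j) / N) ^ 2) := (Real.sqrt_sq_eq_abs _).symm
        _ ≤ Real.sqrt (∑ i, (x t i - (∑ j, x t j) / N) ^ 2) := Real.sqrt_le_sqrt h1
        _ ≤ ρ := hsqrt
    have hij : x t i - x t j
        = (x t i - (∑ j, x t j) / N) - (x t j - (∑ j, x t j) / N) := by ring
    rw [hij]
    calc |(x t i - (∑ j, x t j) / N) - (x t j - (∑ j, x t j) / N)|
        ≤ |x t i - (∑ j, x t j) / N| + |x t j - (∑ j, x t j) / N| := abs_sub _ _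
      _ ≤ 2 * ρ := by linarith [habs i, habs j]
  · push_neg at hex
    exfalso
    set B : ℝ := V 0 / δ with hB_def
    have hB0 : 0 ≤ B := div_nonneg (hV0 0) hδ.le
    have hd := hdec 0 B (le_refl 0) hB0 (fun s hs1 _ => (hex s hs1.le).le)
    have hδB : δ * B = V 0 := by
      rw [hB_def]
      field_simp
    have hVB : V B ≤ 0 := by
      have : V B + δ * B ≤ V 0 + δ * 0 := hd
      rw [hδB] at this
      linarith
    have h2 := hex B hB0
    have h3 : (0:ℝ) < ρ ^ 2 := by positivity
    linarith
end

section
/- Let N ≥ 2, let D ∈ ℝ^{N×m} be a matrix each of whose columns sums to zero, let λ > 0 satisfy eᵀ(D Dᵀ)e ≥ λ‖e‖₂² for every e ∈ ℝ^N with Σᵢ eᵢ = 0, let Π = I_N − (1/N)𝟏𝟏ᵀ, fix β₁ > 0 and ω₀ ≥ 0 with β₁·√λ > ω₀. Then for every δ₀ > 0 there exists β₂* > 0 such that for every β₂ ≥ β₂*, every continuous Ω : [0,∞) → ℝ^N with ‖Π Ω(t)‖₂ ≤ ω₀ for all t, and every continuously differentiable x : [0,∞) → ℝ^N satisfying ẋ(t)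 = −β₁ D tanh(β₂ Dᵀ x(t)) + Ω(t), there exists T ≥ 0 with |x_i(t) − x_j(t)| ≤ δ₀ for all indices i, j and all t ≥ T. That is, by choosing the gain β₂ large enough, the eventual consensus error can be made as small as desired. -/
open Finset

lemma aux_u_tanh (u : ℝ) (hu : 0 ≤ u) : u - 1 ≤ u * Real.tanh u := by
  rw [Real.tanh_eq_sinh_div_cosh, Real.sinh_eq, Real.cosh_eq]
  have ha : (0:ℝ) < Real.exp u := Real.exp_pos u
  have hb : (0:ℝ) < Real.exp (-u) := Real.exp_pos (-u)
  have hab : Real.exp u * Real.exp (-u) = 1 := by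
    rw [← Real.exp_add]; simp
  have h2 : 2*u + 1 ≤ Real.exp (2*u) := Real.add_one_le_exp (2*u)
  have h3 : Real.exp (2*u) = Real.exp u ^ 2 := by
    rw [← Real.exp_nat_mul]; norm_num
  have ht : (Real.exp u - Real.exp (-u))/2 / ((Real.exp u + Real.exp (-u))/2)
      = (Real.exp u - Real.exp (-u)) / (Real.exp u + Real.exp (-u)) := by
    field_simp
  rw [ht, ← mul_div_assoc, le_div_iff₀ (by positivity)]
  nlinarith [mul_pos ha hb, sq_nonneg (Real.exp u - Real.exp (-u))]

lemma aux_tanh (β y : ℝ) (hβ : 0 < β) : |y| - 1/β ≤ y * Real.tanh (β * y) := by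
  have key : ∀ w : ℝ, 0 ≤ w → w - 1/β ≤ w * Real.tanh (β * w) := by
    intro w hw
    have h := aux_u_tanh (β * w) (by positivity)
    have hβ' : β ≠ 0 := hβ.ne'
    rw [← mul_le_mul_iff_right₀ hβ]
    calc β * (w - 1/β) = β * w - 1 := by rw [mul_sub, mul_one_div, div_self hβ']
    _ ≤ (β*w) * Real.tanh (β*w) := h
    _ = β * (w * Real.tanh (β*w)) := by ring
  rcases le_or_gt 0 y with hy | hy
  · rw [abs_of_nonneg hy]; exact key y hy
  · rw [abs_of_neg hy]
    have h := key (-y) (by linarith)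
    have he : β * -y = -(β * y) := by ring
    rw [he, Real.tanh_neg] at h
    linarith [h]

lemma aux_sqrt_sum {ι : Type*} (s : Finset ι) (z : ι → ℝ) :
    Real.sqrt (∑ k ∈ s, z k ^ 2) ≤ ∑ k ∈ s, |z k| := by
  have h1 : ∑ k ∈ s, z k ^ 2 ≤ (∑ k ∈ s, |z k|) ^ 2 := by
    rw [sq, Finset.sum_mul_sum]
    calc ∑ k ∈ s, z k ^ 2 = ∑ k ∈ s, |z k| * |z k| := by
          simp [← sq, sq_abs]
    _ ≤ ∑ i ∈ s, ∑ j ∈ s, |z i| * |z j| := by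
        apply Finset.sum_le_sum
        intro i hi
        exact Finset.single_le_sum (f := fun j => |z i| * |z j|)
          (fun j _ => by positivity) hi
  calc Real.sqrt (∑ k ∈ s, z k ^ 2) ≤ Real.sqrt ((∑ k ∈ s, |z k|)^2) :=
        Real.sqrt_le_sqrt h1
  _ = ∑ k ∈ s, |z k| := Real.sqrt_sq (by positivity)

lemma aux_cs {ι : Type*} (s : Finset ι) (f g : ι → ℝ) :
    ∑ i ∈ s, f i * g i ≤ Real.sqrt (∑ i ∈ s, f i ^ 2) * Real.sqrt (∑ i ∈ s, g i ^ 2) := by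
  have h := Finset.sum_mul_sq_le_sq_mul_sq s f g
  calc ∑ i ∈ s, f i * g i ≤ |∑ i ∈ s, f i * g i| := le_abs_self _
  _ = Real.sqrt ((∑ i ∈ s, f i * g i)^2) := (Real.sqrt_sq_eq_abs _).symm
  _ ≤ Real.sqrt ((∑ i ∈ s, f i ^2) * ∑ i ∈ s, g i ^2) := Real.sqrt_le_sqrt h
  _ = _ := Real.sqrt_mul (by positivity) _

lemma aux_quad (N m : ℕ) (D : Matrix (Fin N) (Fin m) ℝ) (e : Fin N → ℝ) :
    dotProduct e ((D * D.transpose).mulVec e) = ∑ k, (∑ j, D j k * e j) ^ 2 := by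
  calc dotProduct e ((D * D.transpose).mulVec e)
      = ∑ i, e i * ∑ j, (∑ k, D i k * D j k) * e j := by
        simp only [dotProduct, Matrix.mulVec, Matrix.mul_apply,
          Matrix.transpose_apply]
  _ = ∑ i, ∑ j, ∑ k, (D i k * e i) * (D j k * e j) := by
      apply Finset.sum_congr rfl; intro i _
      rw [Finset.mul_sum]
      apply Finset.sum_congr rfl; intro j _
      rw [Finset.sum_mul, Finset.mul_sum]
      apply Finset.sum_congr rfl; intro k _
      ring
  _ = ∑ i, ∑ k, ∑ j, (D i k * e i) * (D j k * e j) :=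
      Finset.sum_congr rfl fun i _ => Finset.sum_comm
  _ = ∑ k, ∑ i, ∑ j, (D i k * e i) * (D j k * e j) := Finset.sum_comm
  _ = ∑ k, (∑ i, D i k * e i) * (∑ j, D j k * e j) := by
      apply Finset.sum_congr rfl; intro k _
      rw [Finset.sum_mul_sum]
  _ = ∑ k, (∑ j, D j k * e j) ^ 2 := by
      apply Finset.sum_congr rfl; intro k _
      rw [sq]

lemma aux_deriv_V (N : ℕ) (x : ℝ → Fin N → ℝ) (f : Fin N → ℝ) (t : ℝ)
    (hx : ∀ i, HasDerivAt (fun s => x s i) (f i) t) :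
    HasDerivAt (fun s => ∑ i, (x s i - (∑ j, x s j) / N) ^ 2)
      (2 * ∑ i, (x t i - (∑ j, x t j) / N) * (f i - (∑ j, f j) / N)) t := by
  have hm : HasDerivAt (fun s => (∑ j, x s j) / (N:ℝ)) ((∑ j, f j) / N) t :=
    (HasDerivAt.fun_sum fun j _ => hx j).div_const N
  have h := HasDerivAt.fun_sum (fun i (_ : i ∈ Finset.univ) =>
    (((hx i).sub hm).pow 2))
  refine h.congr_deriv ?_
  symm
  rw [Finset.mul_sum]
  apply Finset.sum_congr rfl; intro i _
  simp only [Pi.sub_apply]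
  push_cast
  ring

lemma aux_lyap (V Vd : ℝ → ℝ) (B ε : ℝ) (hε : 0 < ε)
    (hVnn : ∀ t, 0 ≤ V t)
    (hderiv : ∀ t, 0 ≤ t → HasDerivAt V (Vd t) t)
    (hkey : ∀ t, 0 ≤ t → B ≤ V t → Vd t ≤ -ε) :
    ∃ T, 0 ≤ T ∧ ∀ t, T ≤ t → V t ≤ B := by
  have hcont : ContinuousOn V (Set.Ici 0) := fun t ht =>
    ((hderiv t ht).continuousAt).continuousWithinAt
  have hdecr : ∀ a b : ℝ, 0 ≤ a → a < b → (∀ t ∈ Set.Ioo a b, B ≤ V t) →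
      V b ≤ V a - ε * (b - a) := by
    intro a b ha hab hmid
    have hder : ∀ t ∈ Set.Ioo a b, HasDerivAt V (Vd t) t :=
      fun t htt => hderiv t (le_trans ha htt.1.le)
    have hcont' : ContinuousOn V (Set.Icc a b) := fun t htt =>
      ((hderiv t (le_trans ha htt.1)).continuousAt).continuousWithinAt
    obtain ⟨cc, hcc, hslope⟩ := exists_hasDerivAt_eq_slope V Vd hab hcont' hder
    have h1 : Vd cc ≤ -ε := hkey cc (le_trans ha hcc.1.le) (hmid cc hcc)
    rw [hslope] at h1
    have hba : 0 < b - a := sub_pos.mpr hab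
    rw [div_le_iff₀ hba] at h1
    linarith [h1]
  have hentry : ∃ t₀, 0 ≤ t₀ ∧ V t₀ ≤ B := by
    by_contra hcon
    push_neg at hcon
    set T1 := V 0 / ε + 1 with hT1
    have hT1pos : 0 < T1 :=
      add_pos_of_nonneg_of_pos (div_nonneg (hVnn 0) hε.le) one_pos
    have hd := hdecr 0 T1 le_rfl hT1pos (fun t htt => (hcon t htt.1.le).le)
    have hεT : ε * T1 = V 0 + ε := by
      rw [hT1]; field_simp
    have h0 := hVnn T1
    linarith [hd]
  obtain ⟨t₀, ht₀0, ht₀⟩ := hentry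
  refine ⟨t₀, ht₀0, ?_⟩
  intro t₁ ht₁
  by_contra hcon
  push_neg at hcon
  have hne : t₀ < t₁ := by
    rcases lt_or_eq_of_le ht₁ with h | h
    · exact h
    · exfalso; rw [← h] at hcon; linarith [ht₀]
  set S := {t ∈ Set.Icc t₀ t₁ | V t ≤ B} with hS
  have hSne : S.Nonempty := ⟨t₀, ⟨le_rfl, hne.le⟩, ht₀⟩
  have hSbdd : BddAbove S := ⟨t₁, fun s hs => hs.1.2⟩
  have hSclosed : IsClosed S := by
    have hSeq : S = Set.Icc t₀ t₁ ∩ V ⁻¹' Set.Iic B := by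
      ext u; simp [hS]
    rw [hSeq]
    exact ContinuousOn.preimage_isClosed_of_isClosed
      (hcont.mono (fun u hu => le_trans ht₀0 hu.1)) isClosed_Icc isClosed_Iic
  set s := sSup S with hs
  have hsS : s ∈ S := hSclosed.csSup_mem hSne hSbdd
  have hsV : V s ≤ B := hsS.2
  have hst₁ : s < t₁ := lt_of_le_of_ne hsS.1.2 (fun h => by rw [h] at hsV; linarith)
  have hmid : ∀ t ∈ Set.Ioo s t₁, B ≤ V t := by
    intro t htt
    by_contra hcV
    push_neg at hcV
    have htS : t ∈ S := ⟨⟨le_trans hsS.1.1 htt.1.le, htt.2.le⟩, hcV.le⟩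
    exact absurd (le_csSup hSbdd htS) (not_le.mpr htt.1)
  have hd := hdecr s t₁ (le_trans ht₀0 hsS.1.1) hst₁ hmid
  nlinarith [hd, hsV, hcon, mul_pos hε (sub_pos.mpr hst₁)]

lemma key_bound (N m : ℕ) (D : Matrix (Fin N) (Fin m) ℝ)
    (hDcol : ∀ k : Fin m, ∑ i, D i k = 0)
    (lam : ℝ) (hlam : 0 < lam)
    (hspec : ∀ e : Fin N → ℝ, (∑ i, e i) = 0 →
      lam * ∑ i, (e i) ^ 2 ≤ dotProduct e ((D * D.transpose).mulVec e))
    (β₁ ω₀ : ℝ) (hβ₁ : 0 < β₁)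
    (β₂ : ℝ) (hβ₂ : 0 < β₂) (xv Ωv : Fin N → ℝ)
    (hNe : ∑ i, (xv i - (∑ j, xv j) / N) = 0)
    (hΩ : Real.sqrt (∑ i, (Ωv i - (∑ j, Ωv j) / N) ^ 2) ≤ ω₀) :
    2 * ∑ i, (xv i - (∑ j, xv j) / N) *
        ((-β₁ * ∑ k, D i k * Real.tanh (β₂ * ∑ j, D j k * xv j) + Ωv i)
          - (∑ j, (-β₁ * ∑ k, D j k * Real.tanh (β₂ * ∑ l, D l k * xv l) + Ωv j)) / N)
      ≤ -2 * (β₁ * Real.sqrt lam - ω₀) * Real.sqrt (∑ i, (xv i - (∑ j, xv j) / N) ^ 2)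
        + 2 * β₁ * m / β₂ := by
  set ev : Fin N → ℝ := fun i => xv i - (∑ j, xv j) / N with hev
  set z : Fin m → ℝ := fun k => ∑ j, D j k * xv j with hz
  set T : Fin m → ℝ := fun k => Real.tanh (β₂ * z k) with hT
  set g : Fin N → ℝ := fun i => -β₁ * ∑ k, D i k * T k + Ωv i with hg
  have step2 : ∑ i, ev i * (g i - (∑ j, g j) / N) = ∑ i, ev i * g i := by
    simp only [mul_sub]
    rw [Finset.sum_sub_distrib, ← Finset.sum_mul, hNe, zero_mul, sub_zero]
  have hzev : ∀ k, ∑ i, D i k * ev i = z k := by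
    intro k
    have hterm : ∀ i, D i k * ev i = D i k * xv i - D i k * ((∑ j, xv j)/N) := by
      intro i; rw [hev]; ring
    rw [Finset.sum_congr rfl (fun i _ => hterm i), Finset.sum_sub_distrib,
      ← Finset.sum_mul, hDcol k, zero_mul, sub_zero, hz]
  have step3 : ∑ i, ev i * g i = -β₁ * (∑ k, z k * T k) + ∑ i, ev i * Ωv i := by
    simp only [hg, mul_add]
    rw [Finset.sum_add_distrib]
    congr 1
    calc ∑ i, ev i * (-β₁ * ∑ k, D i k * T k)
        = -β₁ * ∑ i, ∑ k, (D i k * ev i) * T k := by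
          simp only [Finset.mul_sum]
          apply Finset.sum_congr rfl; intro i _
          apply Finset.sum_congr rfl; intro k _
          ring
    _ = -β₁ * ∑ k, ∑ i, (D i k * ev i) * T k := by rw [Finset.sum_comm]
    _ = -β₁ * ∑ k, z k * T k := by
        congr 1
        apply Finset.sum_congr rfl; intro k _
        rw [← Finset.sum_mul, hzev k]
  have hVnn : 0 ≤ ∑ i, ev i ^ 2 := Finset.sum_nonneg fun i _ => sq_nonneg _
  set sV := Real.sqrt (∑ i, ev i ^ 2) with hsV
  have h4 : Real.sqrt lam * sV - m / β₂ ≤ ∑ k, z k * T k := by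
    have h41 : ∑ k, (|z k| - 1/β₂) ≤ ∑ k, z k * T k :=
      Finset.sum_le_sum fun k _ => by
        simpa [hT] using aux_tanh β₂ (z k) hβ₂
    have h42 : ∑ k, (|z k| - 1/β₂) = (∑ k, |z k|) - m / β₂ := by
      rw [Finset.sum_sub_distrib, Finset.sum_const, Finset.card_univ, Fintype.card_fin,
        nsmul_eq_mul]
      ring
    have h43 : Real.sqrt (∑ k, z k ^ 2) ≤ ∑ k, |z k| := aux_sqrt_sum _ _
    have h44 : lam * ∑ i, ev i ^ 2 ≤ ∑ k, z k ^ 2 := by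
      have hsp := hspec ev hNe
      rw [aux_quad] at hsp
      simp only [hzev] at hsp
      exact hsp
    have h45 : Real.sqrt lam * sV ≤ Real.sqrt (∑ k, z k ^ 2) := by
      rw [hsV, ← Real.sqrt_mul hlam.le]
      exact Real.sqrt_le_sqrt h44
    linarith
  have h5 : ∑ i, ev i * Ωv i ≤ sV * ω₀ := by
    have h51 : ∑ i, ev i * (Ωv i - (∑ j, Ωv j)/N) = ∑ i, ev i * Ωv i := by
      simp only [mul_sub]
      rw [Finset.sum_sub_distrib, ← Finset.sum_mul, hNe, zero_mul, sub_zero]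
    calc ∑ i, ev i * Ωv i = ∑ i, ev i * (Ωv i - (∑ j, Ωv j)/N) := h51.symm
    _ ≤ sV * Real.sqrt (∑ i, (Ωv i - (∑ j, Ωv j)/N)^2) := aux_cs _ _ _
    _ ≤ sV * ω₀ := mul_le_mul_of_nonneg_left hΩ (Real.sqrt_nonneg _)
  have hcomb : -β₁ * (∑ k, z k * T k) ≤ -β₁ * (Real.sqrt lam * sV - m/β₂) := by
    have := mul_le_mul_of_nonneg_left h4 hβ₁.le
    linarith
  calc 2 * ∑ i, ev i * (g i - (∑ j, g j) / N)
      = 2 * (-β₁ * (∑ k, z k * T k) + ∑ i, ev i * Ωv i) := by rw [step2, step3]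
  _ ≤ 2 * (-β₁ * (Real.sqrt lam * sV - m/β₂) + sV * ω₀) := by linarith
  _ = -2 * (β₁ * Real.sqrt lam - ω₀) * sV + 2 * β₁ * m / β₂ := by ring

/-- By choosing the gain β₂ large enough, the eventual consensus error of the
tanh-based single-integrator protocol can be made as small as desired. -/
theorem consensus_error_arbitrarily_small
    (N m : ℕ) (hN : 2 ≤ N)
    (D : Matrix (Fin N) (Fin m) ℝ)
    (hDcol : ∀ k : Fin m, ∑ i, D i k = 0)
    (lam : ℝ) (hlam : 0 < lam)
    (hspec : ∀ e : Fin N → ℝ, (∑ i, e i) = 0 →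
      lam * ∑ i, (e i) ^ 2 ≤ dotProduct e ((D * D.transpose).mulVec e))
    (β₁ ω₀ : ℝ) (hβ₁ : 0 < β₁) (hω₀ : 0 ≤ ω₀)
    (hgain : ω₀ < β₁ * Real.sqrt lam) :
    ∀ δ₀ : ℝ, 0 < δ₀ →
      ∃ β₂star : ℝ, 0 < β₂star ∧
        ∀ β₂ : ℝ, β₂star ≤ β₂ →
          ∀ Ω : ℝ → Fin N → ℝ, ContinuousOn Ω (Set.Ici 0) →
            (∀ t : ℝ, 0 ≤ t →
              Real.sqrt (∑ i, (Ω t i - (∑ j, Ω t j) / N) ^ 2) ≤ ω₀) →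
            ∀ x : ℝ → Fin N → ℝ,
              (∀ t : ℝ, 0 ≤ t → ∀ i : Fin N,
                HasDerivAt (fun s => x s i)
                  (-β₁ * ∑ k, D i k * Real.tanh (β₂ * ∑ j, D j k * x t j) + Ω t i) t) →
              ∃ T : ℝ, 0 ≤ T ∧ ∀ t : ℝ, T ≤ t →
                ∀ i j : Fin N, |x t i - x t j| ≤ δ₀ := by
  intro δ₀ hδ₀
  have hc0 : 0 < β₁ * Real.sqrt lam - ω₀ := sub_pos.mpr hgain
  have hsB0 : 0 < δ₀ / 4 := by positivity
  set c : ℝ := β₁ * Real.sqrt lam - ω₀ with hcdef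
  set sB : ℝ := δ₀ / 4 with hsBdef
  set ε : ℝ := c * sB with hεdef
  have hε0 : 0 < ε := mul_pos hc0 hsB0
  refine ⟨max 1 (2 * β₁ * m / ε), lt_of_lt_of_le one_pos (le_max_left _ _), ?_⟩
  intro β₂ hβ₂ Ω hΩcont hΩb x hx
  have hβ₂1 : (1:ℝ) ≤ β₂ := le_trans (le_max_left _ _) hβ₂
  have hβ₂0 : (0:ℝ) < β₂ := lt_of_lt_of_le one_pos hβ₂1
  have hdrift : 2 * β₁ * (m:ℝ) / β₂ ≤ ε := by
    have h1 : 2 * β₁ * (m:ℝ) / ε ≤ β₂ := le_trans (le_max_right _ _) hβ₂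
    rw [div_le_iff₀ hβ₂0]
    have h2 : 2 * β₁ * (m:ℝ) ≤ β₂ * ε := (div_le_iff₀ hε0).mp h1
    linarith
  -- Lyapunov function and its derivative
  have hesum : ∀ t : ℝ, ∑ i, (x t i - (∑ j, x t j) / N) = 0 := by
    intro t
    have hNari : ((N:ℝ)) ≠ 0 := by
      have : (0:ℕ) < N := by omega
      exact_mod_cast this.ne'
    rw [Finset.sum_sub_distrib, Finset.sum_const, Finset.card_univ, Fintype.card_fin,
      nsmul_eq_mul]
    field_simp
    ring
  have hVnn : ∀ t : ℝ, 0 ≤ ∑ i, (x t i - (∑ j, x t j) / N) ^ 2 :=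
    fun t => Finset.sum_nonneg fun i _ => sq_nonneg _
  obtain ⟨T, hT0, hTB⟩ := aux_lyap
    (fun t => ∑ i, (x t i - (∑ j, x t j) / N) ^ 2)
    (fun t => 2 * ∑ i, (x t i - (∑ j, x t j) / N) *
        ((-β₁ * ∑ k, D i k * Real.tanh (β₂ * ∑ j, D j k * x t j) + Ω t i)
          - (∑ j, (-β₁ * ∑ k, D j k * Real.tanh (β₂ * ∑ l, D l k * x t l) + Ω t j)) / N))
    (sB ^ 2) ε hε0 hVnn
    (fun t ht => aux_deriv_V N x
      (fun i => -β₁ * ∑ k, D i k * Real.tanh (β₂ * ∑ j, D j k * x t j) + Ω t i) t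
      (fun i => hx t ht i))
    (by
      intro t ht hB
      have hb := key_bound N m D hDcol lam hlam hspec β₁ ω₀ hβ₁ β₂ hβ₂0 (x t) (Ω t)
        (hesum t) (hΩb t ht)
      have hsq : sB ≤ Real.sqrt (∑ i, (x t i - (∑ j, x t j) / N) ^ 2) := by
        rw [show sB = Real.sqrt (sB^2) from (Real.sqrt_sq hsB0.le).symm]
        exact Real.sqrt_le_sqrt hB
      have hmono : -2 * c * Real.sqrt (∑ i, (x t i - (∑ j, x t j) / N) ^ 2)
          ≤ -2 * c * sB := by nlinarith [hc0]
      calc 2 * ∑ i, (x t i - (∑ j, x t j) / N) *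
            ((-β₁ * ∑ k, D i k * Real.tanh (β₂ * ∑ j, D j k * x t j) + Ω t i)
              - (∑ j, (-β₁ * ∑ k, D j k * Real.tanh (β₂ * ∑ l, D l k * x t l) + Ω t j)) / N)
          ≤ -2 * c * Real.sqrt (∑ i, (x t i - (∑ j, x t j) / N) ^ 2)
            + 2 * β₁ * m / β₂ := hb
      _ ≤ -2 * c * sB + ε := by linarith
      _ = -ε := by rw [hεdef]; ring)
  refine ⟨T, hT0, ?_⟩
  intro t ht i j
  have hVt : ∑ i, (x t i - (∑ j, x t j) / N) ^ 2 ≤ sB ^ 2 := hTB t ht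
  have hei : ∀ i : Fin N, |x t i - (∑ j, x t j) / N| ≤ sB := by
    intro i
    have h1 : (x t i - (∑ j, x t j) / N) ^ 2 ≤ ∑ i, (x t i - (∑ j, x t j) / N) ^ 2 :=
      Finset.single_le_sum (f := fun i => (x t i - (∑ j, x t j) / N) ^ 2)
        (fun i _ => sq_nonneg _) (Finset.mem_univ i)
    calc |x t i - (∑ j, x t j) / N| = Real.sqrt ((x t i - (∑ j, x t j) / N) ^ 2) :=
          (Real.sqrt_sq_eq_abs _).symm
    _ ≤ Real.sqrt (sB ^ 2) := Real.sqrt_le_sqrt (le_trans h1 hVt)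
    _ = sB := Real.sqrt_sq hsB0.le
  have hxe : x t i - x t j =
      (x t i - (∑ l, x t l) / N) - (x t j - (∑ l, x t l) / N) := by ring
  rw [hxe]
  calc |(x t i - (∑ l, x t l) / N) - (x t j - (∑ l, x t l) / N)|
      ≤ |x t i - (∑ l, x t l) / N| + |x t j - (∑ l, x t l) / N| := abs_sub _ _
  _ ≤ sB + sB := add_le_add (hei i) (hei j)
  _ ≤ δ₀ := by rw [hsBdef]; linarith
end

section
/- Let N ≥ 1 and for i = 1,…,N let L_i : ℝ × [0,∞) → ℝ be twice continuously differentiable with ∂²L_i/∂x²(x,t) ≠ 0 for all (x,t). Let r_i : [0,∞) → ℝ be continuous with Σ_{i=1}^{N} r_i(t) = 0 for all t ≥ 0, and let x_i : [0,∞) → ℝ be continuously differentiable and satisfy ẋ_i(t) = −(∂²L_i/∂x²(x_i(t),t))^{-1}·(∂L_i/∂x(x_i(t),t) + ∂²L_i/∂t∂x(x_i(t),t)) + r_i(t) for all t. Assume the Hessians agree along the trajectories, i.e. ∂²L_i/∂x²(x_i(t),t) = ∂²L_j/∂x²(x_j(t),t) for all i, j and all t ≥ 0. Then the aggregate gradient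 S(t) := Σ_{i=1}^{N} ∂L_i/∂x(x_i(t),t) satisfies S′(t) = −S(t) for all t ≥ 0; consequently S(t) = S(0)·e^{−t} for all t and S(t) → 0 as t → ∞. -/
/-- Aggregate-gradient decay for single-integrator networks under the
interior-point based control law (core of Theorem 1). Here `Lx i`, `Lxx i`,
`Lxt i` denote ∂L_i/∂x, ∂²L_i/∂x² and ∂²L_i/∂t∂x respectively, the second
order data being encoded by the (continuous) total derivative of `Lx i`. -/
theorem aggregate_gradient_decay_single_integrator
    (N : ℕ) (hN : 1 ≤ N)
    (L Lx Lxx Lxt : Fin N → ℝ → ℝ → ℝ)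
    (hL : ∀ i : Fin N, ∀ x t : ℝ, HasDerivAt (fun y => L i y t) (Lx i x t) x)
    (hLx : ∀ i : Fin N, ∀ x t : ℝ,
      HasFDerivAt (fun p : ℝ × ℝ => Lx i p.1 p.2)
        (Lxx i x t • ContinuousLinearMap.fst ℝ ℝ ℝ +
          Lxt i x t • ContinuousLinearMap.snd ℝ ℝ ℝ) (x, t))
    (hLxxCont : ∀ i : Fin N, Continuous (fun p : ℝ × ℝ => Lxx i p.1 p.2))
    (hLxtCont : ∀ i : Fin N, Continuous (fun p : ℝ × ℝ => Lxt i p.1 p.2))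
    (hHess : ∀ i : Fin N, ∀ x t : ℝ, Lxx i x t ≠ 0)
    (r : Fin N → ℝ → ℝ)
    (hrcont : ∀ i : Fin N, Continuous (r i))
    (hrsum : ∀ t : ℝ, 0 ≤ t → ∑ i, r i t = 0)
    (x : Fin N → ℝ → ℝ)
    (hx : ∀ i : Fin N, ∀ t : ℝ, 0 ≤ t →
      HasDerivAt (x i)
        (-(Lxx i (x i t) t)⁻¹ * (Lx i (x i t) t + Lxt i (x i t) t) + r i t) t)
    (hHessEq : ∀ i j : Fin N, ∀ t : ℝ, 0 ≤ t →
      Lxx i (x i t) t = Lxx j (x j t) t)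
    (S : ℝ → ℝ) (hS : S = fun t => ∑ i, Lx i (x i t) t) :
    (∀ t : ℝ, 0 ≤ t → HasDerivAt S (-S t) t) ∧
    (∀ t : ℝ, 0 ≤ t → S t = S 0 * Real.exp (-t)) ∧
    Filter.Tendsto S Filter.atTop (nhds 0) := by
  have i0 : Fin N := ⟨0, hN⟩
  have key : ∀ t : ℝ, 0 ≤ t → HasDerivAt S (-S t) t := by
    intro t ht
    have h1 : ∀ i : Fin N, HasDerivAt (fun s => Lx i (x i s) s)
        (-(Lx i (x i t) t) + Lxx i (x i t) t * r i t) t := by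
      intro i
      have hγ : HasDerivAt (fun s => (x i s, s))
          ((-(Lxx i (x i t) t)⁻¹ * (Lx i (x i t) t + Lxt i (x i t) t) + r i t, 1)) t :=
        (hx i t ht).prodMk (hasDerivAt_id t)
      have h2 := (hLx i (x i t) t).comp_hasDerivAt_of_eq t hγ rfl
      refine h2.congr_deriv ?_
      simp
      field_simp [hHess i (x i t) t]
      ring
    have h3 := HasDerivAt.fun_sum (fun i (_ : i ∈ Finset.univ) => h1 i)
    have h4 : HasDerivAt S (∑ i, (-(Lx i (x i t) t) + Lxx i (x i t) t * r i t)) t := by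
      rw [hS]; exact h3
    have hc : ∑ i, Lxx i (x i t) t * r i t = 0 := by
      calc ∑ i, Lxx i (x i t) t * r i t
          = ∑ i, Lxx i0 (x i0 t) t * r i t := by
            exact Finset.sum_congr rfl fun i _ => by rw [hHessEq i i0 t ht]
        _ = Lxx i0 (x i0 t) t * ∑ i, r i t := by rw [Finset.mul_sum]
        _ = 0 := by rw [hrsum t ht, mul_zero]
    have h5 : ∑ i, (-(Lx i (x i t) t) + Lxx i (x i t) t * r i t) = -S t := by
      rw [Finset.sum_add_distrib, hc, add_zero, hS]
      simp [Finset.sum_neg_distrib]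
    rwa [h5] at h4
  have hsol : ∀ t : ℝ, 0 ≤ t → S t = S 0 * Real.exp (-t) := by
    intro T hT
    have hconst := constant_of_has_deriv_right_zero
      (f := fun t => S t * Real.exp t) (a := 0) (b := T)
      (fun t htt => ((key t htt.1).continuousAt.mul
        Real.continuous_exp.continuousAt).continuousWithinAt)
      (fun t htt => by
        have := (key t htt.1).mul (Real.hasDerivAt_exp t)
        have h0 : -S t * Real.exp t + S t * Real.exp t = 0 := by ring
        rw [h0] at this
        exact this.hasDerivWithinAt)
      T (Set.right_mem_Icc.mpr hT)
    have hne := Real.exp_ne_zero T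
    have : S T * Real.exp T = S 0 := by simpa using hconst
    rw [Real.exp_neg]
    field_simp
    linarith [this]
  refine ⟨key, hsol, ?_⟩
  have heq : S =ᶠ[Filter.atTop] fun t => S 0 * Real.exp (-t) := by
    filter_upwards [Filter.eventually_ge_atTop (0 : ℝ)] with t ht
    exact hsol t ht
  have hlim : Filter.Tendsto (fun t => S 0 * Real.exp (-t)) Filter.atTop (nhds 0) := by
    have := Real.tendsto_exp_neg_atTop_nhds_zero
    simpa using this.const_mul (S 0)
  exact Filter.Tendsto.congr' heq.symm hlim
end

section
/- Let Q : ℝ × [0,∞) → ℝ be twice continuously differentiable with ∂²Q/∂x²(x,t) ≠ 0 for all (x,t), and let x : [0,∞) → ℝ be continuously differentiable and satisfy ẋ(t) = −(∂²Q/∂x²(x(t),t))^{-1}·(∂Q/∂x(x(t),t) + ∂²Q/∂x∂t(x(t),t)) for all t ≥ 0. Then G(t) := ∂Q/∂x(x(t),t) satisfies G′(t) = −G(t) for all t ≥ 0; hence G(t) = G(0)·e^{−t} and G(t) → 0 as t → ∞. -/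
/-- Gradient decay for the centralized single-integrator control law tracking
the minimizer of a time-varying objective Q. Here `Qx`, `Qxx`, `Qxt` denote
∂Q/∂x, ∂²Q/∂x² and ∂²Q/∂x∂t, the second order data being encoded by the
total derivative of `Qx`. -/
theorem gradient_decay_centralized_single_integrator
    (Q Qx Qxx Qxt : ℝ → ℝ → ℝ)
    (hQ : ∀ x t : ℝ, HasDerivAt (fun y => Q y t) (Qx x t) x)
    (hQx : ∀ x t : ℝ,
      HasFDerivAt (fun p : ℝ × ℝ => Qx p.1 p.2)
        (Qxx x t • ContinuousLinearMap.fst ℝ ℝ ℝ +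
          Qxt x t • ContinuousLinearMap.snd ℝ ℝ ℝ) (x, t))
    (hQxxCont : Continuous (fun p : ℝ × ℝ => Qxx p.1 p.2))
    (hQxtCont : Continuous (fun p : ℝ × ℝ => Qxt p.1 p.2))
    (hHess : ∀ x t : ℝ, Qxx x t ≠ 0)
    (x : ℝ → ℝ)
    (hx : ∀ t : ℝ, 0 ≤ t →
      HasDerivAt x (-(Qxx (x t) t)⁻¹ * (Qx (x t) t + Qxt (x t) t)) t)
    (G : ℝ → ℝ) (hG : G = fun t => Qx (x t) t) :
    (∀ t : ℝ, 0 ≤ t → HasDerivAt G (-G t) t) ∧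
    (∀ t : ℝ, 0 ≤ t → G t = G 0 * Real.exp (-t)) ∧
    Filter.Tendsto G Filter.atTop (nhds 0) := by
  subst hG
  have hderiv : ∀ t : ℝ, 0 ≤ t → HasDerivAt (fun t => Qx (x t) t) (-Qx (x t) t) t := by
    intro t ht
    have hc : HasDerivAt (fun s => (x s, s))
        ((-(Qxx (x t) t)⁻¹ * (Qx (x t) t + Qxt (x t) t), 1) : ℝ × ℝ) t :=
      (hx t ht).prodMk (hasDerivAt_id t)
    have := (hQx (x t) t).comp_hasDerivAt (f := fun s => (x s, s)) t hc
    have hval :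
        (Qxx (x t) t • ContinuousLinearMap.fst ℝ ℝ ℝ +
          Qxt (x t) t • ContinuousLinearMap.snd ℝ ℝ ℝ)
          ((-(Qxx (x t) t)⁻¹ * (Qx (x t) t + Qxt (x t) t), 1) : ℝ × ℝ)
          = -Qx (x t) t := by
      simp [ContinuousLinearMap.add_apply, ContinuousLinearMap.smul_apply]
      field_simp [hHess (x t) t]
      ring
    rw [hval] at this
    exact this
  have hsol : ∀ t : ℝ, 0 ≤ t → Qx (x t) t = Qx (x 0) 0 * Real.exp (-t) := by
    intro t ht
    have key : ∀ s ∈ Set.Icc (0:ℝ) t, Qx (x s) s * Real.exp s = Qx (x 0) 0 * Real.exp 0 := by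
      intro s hs
      refine constant_of_has_deriv_right_zero (f := fun u => Qx (x u) u * Real.exp u)
        ?_ ?_ s hs
      · intro u hu
        exact (((hderiv u hu.1).mul (Real.hasDerivAt_exp u)).continuousAt).continuousWithinAt
      · intro u hu
        have h : HasDerivAt (fun u => Qx (x u) u * Real.exp u)
            (-Qx (x u) u * Real.exp u + Qx (x u) u * Real.exp u) u :=
          (hderiv u hu.1).mul (Real.hasDerivAt_exp u)
        have h0 : (-Qx (x u) u * Real.exp u + Qx (x u) u * Real.exp u) = 0 := by ring
        rw [h0] at h
        exact h.hasDerivWithinAt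
    have := key t ⟨ht, le_refl t⟩
    have hexp : Real.exp t ≠ 0 := Real.exp_ne_zero t
    field_simp [Real.exp_neg] at this ⊢
    rw [Real.exp_zero, mul_one] at this
    rw [Real.exp_neg, ← this, mul_assoc, mul_inv_cancel₀ hexp, mul_one]
  refine ⟨hderiv, hsol, ?_⟩
  have heq : ∀ᶠ t in Filter.atTop, Qx (x 0) 0 * Real.exp (-t) = Qx (x t) t := by
    filter_upwards [Filter.eventually_ge_atTop (0:ℝ)] with t ht
    exact (hsol t ht).symm
  have hlim : Filter.Tendsto (fun t => Qx (x 0) 0 * Real.exp (-t)) Filter.atTop (nhds 0) := by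
    have := Real.tendsto_exp_neg_atTop_nhds_zero
    have := this.const_mul (Qx (x 0) 0)
    simpa using this
  exact Filter.Tendsto.congr' heq hlim
end

section
/- Let Q : ℝ × [0,∞) → ℝ be three times continuously differentiable with ∂²Q/∂x²(x,t) ≠ 0 for all (x,t), and define k(x,t) = (∂²Q/∂x²(x,t))^{-1}·(∂Q/∂x(x,t) + ∂²Q/∂t∂x(x,t)). Let x, v : [0,∞) → ℝ be continuously differentiable with ẋ(t) = v(t) and v̇(t) = −(d/dt)[k(x(t),t)] − ∂²Q/∂x²(x(t),t)·∂Q/∂x(x(t),t) for all t ≥ 0. Set G(t) := ∂Q/∂x(x(t),t) and P(t) := v(t) + k(x(t),t). Then for all t ≥ 0: G′(t) = ∂²Q/∂x²(x(t),t)·P(t) − G(t), P′(t) = −∂²Q/∂x²(x(t),t)·G(t), and (d/dt)[½·G(t)² + ½·P(t)²] = −G(t)². Consequently t ↦ G(t)² + P(t)² is nonincreasing and ∫₀^∞ G(t)² dt ≤ ½·(G(0)² + P(0)²). -/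
open MeasureTheory

/-- Lyapunov analysis of the centralized double-integrator control law for a
smooth time-varying objective Q. Here `Qx`, `Qxx`, `Qxt` denote ∂Q/∂x, ∂²Q/∂x²
and ∂²Q/∂t∂x, `k` is the feedforward term, and `kd t` is the total time
derivative of t ↦ k(x(t),t) (which exists since Q is C³). -/
theorem centralized_double_integrator_lyapunov
    (Q Qx Qxx Qxt : ℝ → ℝ → ℝ)
    (hQ : ∀ x t : ℝ, HasDerivAt (fun y => Q y t) (Qx x t) x)
    (hQx : ∀ x t : ℝ,
      HasFDerivAt (fun p : ℝ × ℝ => Qx p.1 p.2)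
        (Qxx x t • ContinuousLinearMap.fst ℝ ℝ ℝ +
          Qxt x t • ContinuousLinearMap.snd ℝ ℝ ℝ) (x, t))
    (hHess : ∀ x t : ℝ, Qxx x t ≠ 0)
    (k : ℝ → ℝ → ℝ)
    (hk : k = fun x t => (Qxx x t)⁻¹ * (Qx x t + Qxt x t))
    (x v : ℝ → ℝ)
    (kd : ℝ → ℝ)
    (hkd : ∀ t : ℝ, 0 ≤ t → HasDerivAt (fun s => k (x s) s) (kd t) t)
    (hxv : ∀ t : ℝ, 0 ≤ t → HasDerivAt x (v t) t)
    (hv : ∀ t : ℝ, 0 ≤ t →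
      HasDerivAt v (-kd t - Qxx (x t) t * Qx (x t) t) t)
    (G P : ℝ → ℝ)
    (hG : G = fun t => Qx (x t) t)
    (hP : P = fun t => v t + k (x t) t) :
    (∀ t : ℝ, 0 ≤ t → HasDerivAt G (Qxx (x t) t * P t - G t) t) ∧
    (∀ t : ℝ, 0 ≤ t → HasDerivAt P (-(Qxx (x t) t * G t)) t) ∧
    (∀ t : ℝ, 0 ≤ t →
      HasDerivAt (fun s => (1 / 2) * (G s) ^ 2 + (1 / 2) * (P s) ^ 2)
        (-(G t) ^ 2) t) ∧
    AntitoneOn (fun t => (G t) ^ 2 + (P t) ^ 2) (Set.Ici (0 : ℝ)) ∧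
    (∫ t in Set.Ioi (0 : ℝ), (G t) ^ 2) ≤ (1 / 2) * ((G 0) ^ 2 + (P 0) ^ 2) := by
  subst hk hG hP
  -- derivative of G
  have hGd : ∀ t : ℝ, 0 ≤ t → HasDerivAt (fun t => Qx (x t) t)
      (Qxx (x t) t * (v t + (Qxx (x t) t)⁻¹ * (Qx (x t) t + Qxt (x t) t))
        - Qx (x t) t) t := by
    intro t ht
    have hp : HasDerivAt (fun s => (x s, s)) (v t, 1) t := (hxv t ht).prodMk (hasDerivAt_id t)
    have h2 := HasFDerivAt.comp_hasDerivAt (f := fun s => (x s, s))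
      (l := fun p : ℝ × ℝ => Qx p.1 p.2) t (hQx (x t) t) hp
    refine h2.congr_deriv ?_
    simp [ContinuousLinearMap.smul_apply, Function.comp]
    field_simp [hHess (x t) t]
    ring
  have hPd : ∀ t : ℝ, 0 ≤ t → HasDerivAt
      (fun t => v t + (Qxx (x t) t)⁻¹ * (Qx (x t) t + Qxt (x t) t))
      (-(Qxx (x t) t * Qx (x t) t)) t := by
    intro t ht
    have := (hv t ht).add (hkd t ht)
    refine this.congr_deriv ?_
    ring
  set G : ℝ → ℝ := fun t => Qx (x t) t with hGdef
  set P : ℝ → ℝ := fun t => v t + (Qxx (x t) t)⁻¹ * (Qx (x t) t + Qxt (x t) t) with hPdef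
  have hVd : ∀ t : ℝ, 0 ≤ t → HasDerivAt
      (fun s => (1 / 2) * (G s) ^ 2 + (1 / 2) * (P s) ^ 2) (-(G t) ^ 2) t := by
    intro t ht
    have h1 := (((hGd t ht).pow 2).const_mul (1/2 : ℝ)).add
      (((hPd t ht).pow 2).const_mul (1/2 : ℝ))
    refine h1.congr_deriv ?_
    ring
  refine ⟨hGd, hPd, hVd, ?_, ?_⟩
  · -- antitone
    have h2 : ∀ t : ℝ, 0 ≤ t → HasDerivAt (fun t => (G t) ^ 2 + (P t) ^ 2)
        (-(2 * (G t) ^ 2)) t := by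
      intro t ht
      have h3 := ((hGd t ht).pow 2).add ((hPd t ht).pow 2)
      refine h3.congr_deriv ?_
      ring
    apply antitoneOn_of_deriv_nonpos (convex_Ici 0)
    · exact fun t ht => ((h2 t ht).continuousAt).continuousWithinAt
    · intro t ht
      rw [interior_Ici] at ht
      exact (h2 t (le_of_lt ht)).differentiableAt.differentiableWithinAt
    · intro t ht
      rw [interior_Ici] at ht
      rw [(h2 t (le_of_lt ht)).deriv]
      nlinarith [sq_nonneg (G t)]
  · -- integral bound
    set V : ℝ → ℝ := fun s => (1 / 2) * (G s) ^ 2 + (1 / 2) * (P s) ^ 2 with hVdef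
    have hVnn : ∀ s, 0 ≤ V s := by intro s; positivity
    have hVanti : AntitoneOn V (Set.Ici (0 : ℝ)) := by
      apply antitoneOn_of_deriv_nonpos (convex_Ici 0)
      · exact fun t ht => ((hVd t ht).continuousAt).continuousWithinAt
      · intro t ht
        rw [interior_Ici] at ht
        exact (hVd t (le_of_lt ht)).differentiableAt.differentiableWithinAt
      · intro t ht
        rw [interior_Ici] at ht
        rw [(hVd t (le_of_lt ht)).deriv]
        nlinarith [sq_nonneg (G t)]
    -- V (max t 0) is antitone on ℝ
    set W : ℝ → ℝ := fun t => V (max t 0) with hWdef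
    have hWanti : Antitone W := by
      intro a b hab
      exact hVanti (le_max_right a 0) (le_max_right b 0) (max_le_max hab le_rfl)
    have hWbdd : BddBelow (Set.range W) := ⟨0, by rintro _ ⟨t, rfl⟩; exact hVnn _⟩
    have hWtend : Filter.Tendsto W Filter.atTop (nhds (⨅ t, W t)) :=
      tendsto_atTop_ciInf hWanti hWbdd
    have hWV : W =ᶠ[Filter.atTop] V := by
      filter_upwards [Filter.eventually_ge_atTop (0 : ℝ)] with t ht
      simp [hWdef, max_eq_left ht]
    have hVtend : Filter.Tendsto V Filter.atTop (nhds (⨅ t, W t)) :=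
      hWtend.congr' hWV
    have hlnn : 0 ≤ ⨅ t, W t :=
      ge_of_tendsto' hWtend fun t => hVnn _
    by_cases hint : MeasureTheory.IntegrableOn (fun t => (G t) ^ 2) (Set.Ioi (0 : ℝ))
    · have hftc := integral_Ioi_of_hasDerivAt_of_tendsto'
        (f := V) (f' := fun t => -(G t) ^ 2) (a := 0)
        (fun t ht => hVd t ht) (hint.neg) hVtend
      have : (∫ t in Set.Ioi (0 : ℝ), -(G t) ^ 2) = -∫ t in Set.Ioi (0 : ℝ), (G t) ^ 2 :=
        MeasureTheory.integral_neg _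
      rw [this] at hftc
      have hV0 : V 0 = (1 / 2) * ((G 0) ^ 2 + (P 0) ^ 2) := by ring
      rw [hV0] at hftc
      set I := ∫ t in Set.Ioi (0 : ℝ), (G t) ^ 2 with hI
      set m := ⨅ t, W t with hm
      linarith
    · rw [MeasureTheory.integral_undef hint]
      positivity
end

section
/- Let N ≥ 1 and for i = 1,…,N let L_i : ℝ × [0,∞) → ℝ be three times continuously differentiable with ∂²L_i/∂x²(x,t) ≠ 0 for all (x,t), and define k_i(x,t) = (∂²L_i/∂x²(x,t))^{-1}·(∂L_i/∂x(x,t) + ∂²L_i/∂t∂x(x,t)). Let r_i : [0,∞) → ℝ be continuous with Σ_{i=1}^{N} r_i(t) = 0 for all t, and let x_i, v_i : [0,∞) → ℝ be continuously differentiable with ẋ_i(t) = v_i(t) and v̇_i(t) = −(d/dt)[k_i(x_i(t),t)] − ∂²L_i/∂x²(x_i(t),t)·∂L_i/∂x(x_i(t),t) + r_i(t) for all t. Assume there is a function c : [0,∞) → ℝ with ∂²L_i/∂x²(x_i(t),t) = c(t) for all i and all t (equal Hessians along the trajectories). Then S(t) := Σ_{i=1}^{N} ∂L_i/∂x(x_i(t),t)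 and P(t) := Σ_{i=1}^{N} (v_i(t) + k_i(x_i(t),t)) satisfy S′(t) = c(t)·P(t) − S(t) and P′(t) = −c(t)·S(t) for all t ≥ 0, so that (d/dt)[½·S(t)² + ½·P(t)²] = −S(t)²; consequently S(t)² + P(t)² ≤ S(0)² + P(0)² for all t and ∫₀^∞ S(t)² dt ≤ ½·(S(0)² + P(0)²). -/
open MeasureTheory

/-- Lyapunov analysis for double-integrator networks under the interior-point
based control law (core of Theorem 2). Here `Lx i`, `Lxx i`, `Lxt i` denote
∂L_i/∂x, ∂²L_i/∂x² and ∂²L_i/∂t∂x, `k i` is the feedforward term of agent i,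
and `kd i t` is the total time derivative of t ↦ k_i(x_i(t),t) (which exists
since L_i is C³). The Hessians along the trajectories agree and equal c(t). -/
theorem double_integrator_aggregate_lyapunov
    (N : ℕ) (hN : 1 ≤ N)
    (L Lx Lxx Lxt : Fin N → ℝ → ℝ → ℝ)
    (hL : ∀ i : Fin N, ∀ x t : ℝ, HasDerivAt (fun y => L i y t) (Lx i x t) x)
    (hLx : ∀ i : Fin N, ∀ x t : ℝ,
      HasFDerivAt (fun p : ℝ × ℝ => Lx i p.1 p.2)
        (Lxx i x t • ContinuousLinearMap.fst ℝ ℝ ℝ +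
          Lxt i x t • ContinuousLinearMap.snd ℝ ℝ ℝ) (x, t))
    (hHess : ∀ i : Fin N, ∀ x t : ℝ, Lxx i x t ≠ 0)
    (k : Fin N → ℝ → ℝ → ℝ)
    (hk : ∀ i : Fin N, k i = fun x t => (Lxx i x t)⁻¹ * (Lx i x t + Lxt i x t))
    (r : Fin N → ℝ → ℝ)
    (hrcont : ∀ i : Fin N, Continuous (r i))
    (hrsum : ∀ t : ℝ, 0 ≤ t → ∑ i, r i t = 0)
    (x v : Fin N → ℝ → ℝ)
    (kd : Fin N → ℝ → ℝ)
    (hkd : ∀ i : Fin N, ∀ t : ℝ, 0 ≤ t →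
      HasDerivAt (fun s => k i (x i s) s) (kd i t) t)
    (hxv : ∀ i : Fin N, ∀ t : ℝ, 0 ≤ t → HasDerivAt (x i) (v i t) t)
    (hv : ∀ i : Fin N, ∀ t : ℝ, 0 ≤ t →
      HasDerivAt (v i)
        (-kd i t - Lxx i (x i t) t * Lx i (x i t) t + r i t) t)
    (c : ℝ → ℝ)
    (hHessEq : ∀ i : Fin N, ∀ t : ℝ, 0 ≤ t → Lxx i (x i t) t = c t)
    (S P : ℝ → ℝ)
    (hS : S = fun t => ∑ i, Lx i (x i t) t)
    (hP : P = fun t => ∑ i, (v i t + k i (x i t) t)) :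
    (∀ t : ℝ, 0 ≤ t → HasDerivAt S (c t * P t - S t) t) ∧
    (∀ t : ℝ, 0 ≤ t → HasDerivAt P (-(c t * S t)) t) ∧
    (∀ t : ℝ, 0 ≤ t →
      HasDerivAt (fun s => (1 / 2) * (S s) ^ 2 + (1 / 2) * (P s) ^ 2)
        (-(S t) ^ 2) t) ∧
    (∀ t : ℝ, 0 ≤ t → (S t) ^ 2 + (P t) ^ 2 ≤ (S 0) ^ 2 + (P 0) ^ 2) ∧
    (∫ t in Set.Ioi (0 : ℝ), (S t) ^ 2) ≤ (1 / 2) * ((S 0) ^ 2 + (P 0) ^ 2) := by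

  have hS' : ∀ t : ℝ, 0 ≤ t → HasDerivAt S (c t * P t - S t) t := by
    intro t ht
    have key : ∀ i : Fin N, HasDerivAt (fun s => Lx i (x i s) s)
        (c t * (v i t + k i (x i t) t) - Lx i (x i t) t) t := by
      intro i
      have hp : HasDerivAt (fun s => ((x i s, s) : ℝ × ℝ)) (v i t, 1) t :=
        (hxv i t ht).prodMk (hasDerivAt_id t)
      have hcomp := HasFDerivAt.comp_hasDerivAt (f := fun s => ((x i s, s) : ℝ × ℝ)) t (hLx i (x i t) t) hp
      convert! hcomp using 1
      have hk' : k i (x i t) t = (Lxx i (x i t) t)⁻¹ * (Lx i (x i t) t + Lxt i (x i t) t) := by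
        rw [hk i]
      have hne := hHess i (x i t) t
      have hc : Lxx i (x i t) t = c t := hHessEq i t ht
      simp only [ContinuousLinearMap.add_apply, ContinuousLinearMap.coe_smul',
        Pi.smul_apply, ContinuousLinearMap.coe_fst', ContinuousLinearMap.coe_snd',
        smul_eq_mul, mul_one]
      rw [hk', ← hc]
      field_simp
      ring
    have hsum := HasDerivAt.fun_sum (u := Finset.univ) (fun i _ => key i)
    rw [hS, hP]
    convert! hsum using 1
    simp only [Finset.sum_sub_distrib, Finset.mul_sum]
  have hP' : ∀ t : ℝ, 0 ≤ t → HasDerivAt P (-(c t * S t)) t := by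
    intro t ht
    have key : ∀ i : Fin N, HasDerivAt (fun s => v i s + k i (x i s) s)
        (-(c t * Lx i (x i t) t) + r i t) t := by
      intro i
      have := (hv i t ht).fun_add (hkd i t ht)
      convert! this using 1
      rw [← hHessEq i t ht]
      ring
    have hsum := HasDerivAt.fun_sum (u := Finset.univ) (fun i _ => key i)
    rw [hP, hS]
    convert! hsum using 1
    rw [Finset.sum_add_distrib, hrsum t ht, add_zero]
    simp only [Finset.mul_sum, ← Finset.sum_neg_distrib]
  have hVd : ∀ t : ℝ, 0 ≤ t →
      HasDerivAt (fun s => (1 / 2) * (S s) ^ 2 + (1 / 2) * (P s) ^ 2)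
        (-(S t) ^ 2) t := by
    intro t ht
    have h1 := (((hS' t ht).fun_pow 2).const_mul ((1:ℝ)/2)).fun_add
      (((hP' t ht).fun_pow 2).const_mul ((1:ℝ)/2))
    convert! h1 using 1
    ring
  have hanti : AntitoneOn (fun s => (1 / 2) * (S s) ^ 2 + (1 / 2) * (P s) ^ 2) (Set.Ici 0) := by
    apply antitoneOn_of_deriv_nonpos (convex_Ici 0)
    · intro t ht
      exact ((hVd t ht).continuousAt).continuousWithinAt
    · intro t ht
      rw [interior_Ici] at ht
      exact (hVd t ht.le).differentiableAt.differentiableWithinAt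
    · intro t ht
      rw [interior_Ici] at ht
      rw [(hVd t ht.le).deriv]
      nlinarith [sq_nonneg (S t)]
  have hbound : ∀ t : ℝ, 0 ≤ t → (S t) ^ 2 + (P t) ^ 2 ≤ (S 0) ^ 2 + (P 0) ^ 2 := by
    intro t ht
    have := hanti (Set.self_mem_Ici) (Set.mem_Ici.mpr ht) ht
    simp only at this
    linarith
  refine ⟨hS', hP', hVd, hbound, ?_⟩
  have hV0 : (0:ℝ) ≤ (1 / 2) * ((S 0) ^ 2 + (P 0) ^ 2) := by positivity
  by_cases hint : MeasureTheory.IntegrableOn (fun t => (S t) ^ 2) (Set.Ioi 0)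
  · have htend := MeasureTheory.intervalIntegral_tendsto_integral_Ioi 0 hint Filter.tendsto_id
    refine le_of_tendsto htend ?_
    filter_upwards [Filter.eventually_ge_atTop (0:ℝ)] with T hT
    simp only [id_eq]
    have hftc : ∫ s in (0:ℝ)..T, (S s) ^ 2
        = (fun s => -((1 / 2) * (S s) ^ 2 + (1 / 2) * (P s) ^ 2)) T
          - (fun s => -((1 / 2) * (S s) ^ 2 + (1 / 2) * (P s) ^ 2)) 0 := by
      apply intervalIntegral.integral_eq_sub_of_hasDerivAt
      · intro s hs
        rw [Set.uIcc_of_le hT] at hs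
        have := (hVd s hs.1).fun_neg
        simpa using this
      · apply ContinuousOn.intervalIntegrable
        intro s hs
        rw [Set.uIcc_of_le hT] at hs
        exact (((hS' s hs.1).continuousAt).pow 2).continuousWithinAt
    simp only at hftc
    rw [hftc]
    have hb := hbound T hT
    nlinarith [sq_nonneg (S T), sq_nonneg (P T)]
  · rw [MeasureTheory.integral_undef hint]
    exact hV0
end

section
/- For every natural number N ≥ 1, every real p > 0, and every vector v ∈ ℝ^N, it holds that vᵀ Π sig(v)^p ≥ 0, where Π = I_N − (1/N)·𝟏𝟏ᵀ and sig(v)^p denotes the vector with i-th component |v_i|^p·sgn(v_i). Equivalently, (Σ_{i=1}^{N} v_i)·(Σ_{i=1}^{N} |v_i|^p·sgn(v_i)) ≤ N·Σ_{i=1}^{N} |v_i|^{p+1}. -/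
lemma sig_monotone (p : ℝ) (hp : 0 < p) :
    Monotone (fun x : ℝ => |x| ^ p * Real.sign x) := by
  intro a b hab
  simp only
  rcases lt_trichotomy a 0 with ha | ha | ha
  · rw [Real.sign_of_neg ha]
    rcases lt_trichotomy b 0 with hb | hb | hb
    · rw [Real.sign_of_neg hb]
      have : |b| ≤ |a| := by
        rw [abs_of_neg ha, abs_of_neg hb]; linarith
      nlinarith [Real.rpow_le_rpow (abs_nonneg b) this hp.le,
        Real.rpow_nonneg (abs_nonneg b) p]
    · simp [hb]
      positivity
    · rw [Real.sign_of_pos hb]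
      nlinarith [Real.rpow_nonneg (abs_nonneg a) p, Real.rpow_nonneg (abs_nonneg b) p]
  · subst ha
    simp
    rcases lt_trichotomy b 0 with hb | hb | hb
    · linarith
    · simp [hb]
    · rw [Real.sign_of_pos hb]; positivity
  · have hb : 0 < b := lt_of_lt_of_le ha hab
    rw [Real.sign_of_pos ha, Real.sign_of_pos hb, mul_one, mul_one]
    exact Real.rpow_le_rpow (abs_nonneg a) (abs_le_abs (by linarith) (by linarith)) hp.le

/-- Nonnegativity of vᵀ Π sig(v)^p, where Π = I − (1/N)𝟏𝟏ᵀ and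
sig(y)^p = |y|^p · sgn(y) componentwise, together with the equivalent
Chebyshev-type sum inequality. -/
theorem dotProduct_pi_sig_nonneg
    (N : ℕ) (hN : 1 ≤ N) (p : ℝ) (hp : 0 < p) (v : Fin N → ℝ) :
    (0 ≤ ∑ i, v i * ((|v i| ^ p * Real.sign (v i)) -
        (1 / (N : ℝ)) * ∑ j, |v j| ^ p * Real.sign (v j))) ∧
    (∑ i, v i) * (∑ i, |v i| ^ p * Real.sign (v i)) ≤
      (N : ℝ) * ∑ i, |v i| ^ (p + 1) := by
  set g : Fin N → ℝ := fun i => |v i| ^ p * Real.sign (v i) with hg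
  have hmono : Monovary v g := by
    intro i j hij
    by_contra h
    exact absurd (sig_monotone p hp (le_of_not_ge h)) (not_le.mpr hij)
  have hcheb := hmono.sum_mul_sum_le_card_mul_sum
  simp only [Finset.card_univ, Fintype.card_fin] at hcheb
  have hvg : ∀ i, v i * g i = |v i| ^ (p + 1) := by
    intro i
    show v i * (|v i| ^ p * Real.sign (v i)) = _
    rcases lt_trichotomy (v i) 0 with h | h | h
    · rw [Real.sign_of_neg h, abs_of_neg h, Real.rpow_add_one (by linarith)]
      ring
    · simp [h, Real.rpow_add_one, Real.zero_rpow (by positivity : p + 1 ≠ 0)]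
    · rw [Real.sign_of_pos h, abs_of_pos h, Real.rpow_add_one (ne_of_gt h)]
      ring
  have key : (∑ i, v i) * (∑ i, g i) ≤ (N : ℝ) * ∑ i, |v i| ^ (p + 1) := by
    calc (∑ i, v i) * (∑ i, g i) ≤ (N : ℝ) * ∑ i, v i * g i := by exact_mod_cast hcheb
    _ = (N : ℝ) * ∑ i, |v i| ^ (p + 1) := by
        congr 1; exact Finset.sum_congr rfl fun i _ => hvg i
  refine ⟨?_, key⟩
  have hNpos : (0:ℝ) < N := by exact_mod_cast hN
  have expand : ∑ i, v i * (g i - (1 / (N : ℝ)) * ∑ j, g j)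
      = (∑ i, |v i| ^ (p + 1)) - (1 / (N : ℝ)) * ((∑ i, v i) * (∑ i, g i)) := by
    simp only [mul_sub]
    rw [Finset.sum_sub_distrib]
    congr 1
    · exact Finset.sum_congr rfl fun i _ => hvg i
    · rw [← Finset.sum_mul]; ring
  rw [expand]
  rw [sub_nonneg, div_mul_eq_mul_div, one_mul, div_le_iff₀ hNpos]
  linarith [key]
end

section
/- Let N ≥ 2 and let D ∈ ℝ^{N×m} be a matrix each of whose columns sums to zero (𝟏ᵀD = 0), and let λ > 0 satisfy eᵀ(D Dᵀ)e ≥ λ·‖e‖₂² for every e ∈ ℝ^N with Σᵢ eᵢ = 0. Then for all β₁, β₂ > 0, all ω₀ ≥ 0, every e ∈ ℝ^N with Σᵢ eᵢ = 0, and every w ∈ ℝ^N with ‖w‖₂ ≤ ω₀: eᵀ(−β₁·D·tanh(β₂·Dᵀe) + w) ≤ −(β₁·√λ − ω₀)·‖e‖₂ + 0.2785·β₁·m/β₂, where tanh acts componentwise. -/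
lemma key_exp (t : ℝ) (ht : 0 ≤ t) : t ≤ 0.2785 * (Real.exp t + 1) := by
  have he2 : (1.3211319:ℝ) ≤ Real.exp 0.2785 := by
    have h := Real.sum_le_exp_of_nonneg (x := 0.2785) (by norm_num) 5
    have heq : ∑ i ∈ Finset.range 5, (0.2785:ℝ) ^ i / (Nat.factorial i) =
        1 + 0.2785 + 0.2785^2/2 + 0.2785^3/6 + 0.2785^4/24 := by
      simp [Finset.sum_range_succ, Nat.factorial]
    rw [heq] at h
    nlinarith
  have he1 : (2.7182818283:ℝ) < Real.exp 1 := Real.exp_one_gt_d9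
  have hkey : (1:ℝ) ≤ 0.2785 * Real.exp 1.2785 := by
    have hsplit : Real.exp (1.2785:ℝ) = Real.exp 1 * Real.exp 0.2785 := by
      rw [← Real.exp_add]; norm_num
    nlinarith
  rcases le_or_gt t 0.2785 with h | h
  · have h1 : (1:ℝ) ≤ Real.exp t := Real.one_le_exp ht
    nlinarith
  · have h1 : Real.exp t = Real.exp 1.2785 * Real.exp (t - 1.2785) := by
      rw [← Real.exp_add]; ring_nf
    have h2 : t - 0.2785 ≤ Real.exp (t - 1.2785) := by
      have := Real.add_one_le_exp (t - 1.2785); linarith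
    have he : (0:ℝ) < Real.exp 1.2785 := Real.exp_pos _
    nlinarith [mul_le_mul_of_nonneg_left h2 he.le]

lemma key_tanh (s : ℝ) : |s| - s * Real.tanh s ≤ 0.2785 := by
  have main : ∀ s : ℝ, 0 ≤ s → s - s * Real.tanh s ≤ 0.2785 := by
    intro s hs
    have ha : (0:ℝ) < Real.exp s := Real.exp_pos _
    have hb : (0:ℝ) < Real.exp (-s) := Real.exp_pos _
    have hpos : (0:ℝ) < Real.exp s + Real.exp (-s) := by positivity
    have htanh : Real.tanh s = (Real.exp s - Real.exp (-s)) / (Real.exp s + Real.exp (-s)) := by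
      rw [Real.tanh_eq_sinh_div_cosh, Real.sinh_eq, Real.cosh_eq]
      field_simp
    have hab : Real.exp s * Real.exp (-s) = 1 := by
      rw [← Real.exp_add]; simp
    have h2 : 2 * s ≤ 0.2785 * (Real.exp (2*s) + 1) := key_exp _ (by linarith)
    have h2s : Real.exp (2*s) = Real.exp s * Real.exp s := by
      rw [← Real.exp_add]; ring_nf
    have heq : s - s * ((Real.exp s - Real.exp (-s)) / (Real.exp s + Real.exp (-s)))
        = (2 * s * Real.exp (-s)) / (Real.exp s + Real.exp (-s)) := by
      field_simp; ring
    rw [htanh, heq, div_le_iff₀ hpos]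
    nlinarith [mul_le_mul_of_nonneg_right h2 hb.le]
  rcases le_total 0 s with hs | hs
  · rw [abs_of_nonneg hs]; exact main s hs
  · have := main (-s) (by linarith)
    rw [abs_of_nonpos hs]
    simpa [Real.tanh_neg] using this

/-- Key Lyapunov-derivative inequality in the proof of the practical-consensus
lemma: for a mean-zero error vector e and a drift w of norm at most ω₀,
eᵀ(−β₁ D tanh(β₂ Dᵀe) + w) ≤ −(β₁√λ − ω₀)‖e‖₂ + 0.2785 β₁ m / β₂. -/
theorem lyapunov_derivative_inequality
    (N m : ℕ) (hN : 2 ≤ N)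
    (D : Matrix (Fin N) (Fin m) ℝ)
    (hDcol : ∀ k : Fin m, ∑ i, D i k = 0)
    (lam : ℝ) (hlam : 0 < lam)
    (hspec : ∀ e : Fin N → ℝ, (∑ i, e i) = 0 →
      lam * ∑ i, (e i) ^ 2 ≤ dotProduct e ((D * D.transpose).mulVec e))
    (β₁ β₂ ω₀ : ℝ) (hβ₁ : 0 < β₁) (hβ₂ : 0 < β₂) (hω₀ : 0 ≤ ω₀)
    (e : Fin N → ℝ) (he : (∑ i, e i) = 0)
    (w : Fin N → ℝ) (hw : Real.sqrt (∑ i, (w i) ^ 2) ≤ ω₀) :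
    (∑ i, e i * (-β₁ * (∑ k, D i k * Real.tanh (β₂ * ∑ j, D j k * e j)) + w i)) ≤
      -(β₁ * Real.sqrt lam - ω₀) * Real.sqrt (∑ i, (e i) ^ 2) +
        0.2785 * β₁ * m / β₂ := by
  set y : Fin m → ℝ := fun k => ∑ j, D j k * e j with hy
  set T : Fin m → ℝ := fun k => Real.tanh (β₂ * y k) with hT
  -- Step A: split the sum
  have hsplit : (∑ i, e i * (-β₁ * (∑ k, D i k * T k) + w i))
      = -β₁ * (∑ k, y k * T k) + ∑ i, e i * w i := by
    simp_rw [mul_add, Finset.sum_add_distrib]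
    congr 1
    calc ∑ i, e i * (-β₁ * ∑ k, D i k * T k)
        = ∑ i, ∑ k, -β₁ * (D i k * e i * T k) := by
          refine Finset.sum_congr rfl fun i _ => ?_
          rw [Finset.mul_sum, Finset.mul_sum]
          exact Finset.sum_congr rfl fun k _ => by ring
      _ = ∑ k, ∑ i, -β₁ * (D i k * e i * T k) := Finset.sum_comm
      _ = ∑ k, -β₁ * (y k * T k) := by
          refine Finset.sum_congr rfl fun k _ => ?_
          rw [hy]
          simp only
          rw [Finset.sum_mul, Finset.mul_sum]
      _ = -β₁ * ∑ k, y k * T k := (Finset.mul_sum _ _ _).symm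
  -- Step B: pointwise tanh bound
  have hB : ∑ k, |y k| - 0.2785 * m / β₂ ≤ ∑ k, y k * T k := by
    have hpt : ∀ k, |y k| - 0.2785 / β₂ ≤ y k * T k := by
      intro k
      have := key_tanh (β₂ * y k)
      have habs : |β₂ * y k| = β₂ * |y k| := by
        rw [abs_mul, abs_of_pos hβ₂]
      rw [habs] at this
      have hd : 0.2785 / β₂ * β₂ = 0.2785 := div_mul_cancel₀ _ hβ₂.ne'
      rw [hT]; simp only
      nlinarith [this, hd, hβ₂, mul_pos hβ₂ hβ₂]
    calc ∑ k, |y k| - 0.2785 * m / β₂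
        = ∑ k, (|y k| - 0.2785 / β₂) := by
          rw [Finset.sum_sub_distrib, Finset.sum_const, Finset.card_univ, Fintype.card_fin]
          ring
      _ ≤ ∑ k, y k * T k := Finset.sum_le_sum fun k _ => hpt k
  -- Step D: quadratic form identity
  have hquad : dotProduct e ((D * D.transpose).mulVec e) = ∑ k, (y k) ^ 2 := by
    simp only [dotProduct, Matrix.mulVec, Matrix.mul_apply, Matrix.transpose_apply,
      dotProduct]
    calc ∑ i, e i * ∑ j, (∑ k, D i k * D j k) * e j
        = ∑ i, ∑ j, ∑ k, D i k * e i * (D j k * e j) := by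
          refine Finset.sum_congr rfl fun i _ => ?_
          rw [Finset.mul_sum]
          refine Finset.sum_congr rfl fun j _ => ?_
          rw [Finset.sum_mul, Finset.mul_sum]
          exact Finset.sum_congr rfl fun k _ => by ring
      _ = ∑ i, ∑ k, ∑ j, D i k * e i * (D j k * e j) :=
          Finset.sum_congr rfl fun i _ => Finset.sum_comm
      _ = ∑ k, ∑ i, ∑ j, D i k * e i * (D j k * e j) := Finset.sum_comm
      _ = ∑ k, (∑ i, D i k * e i) * (∑ j, D j k * e j) := by
          refine Finset.sum_congr rfl fun k _ => ?_
          rw [Finset.sum_mul]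
          exact Finset.sum_congr rfl fun i _ => by rw [Finset.mul_sum]
      _ = ∑ k, (y k) ^ 2 := by
          refine Finset.sum_congr rfl fun k _ => ?_
          rw [hy]; ring
  have hL : lam * ∑ i, (e i) ^ 2 ≤ ∑ k, (y k) ^ 2 := hquad ▸ hspec e he
  -- Step C: ℓ² ≤ ℓ¹
  have hEnn : (0:ℝ) ≤ ∑ i, (e i) ^ 2 := Finset.sum_nonneg fun i _ => sq_nonneg _
  have hynn : (0:ℝ) ≤ ∑ k, |y k| := Finset.sum_nonneg fun k _ => abs_nonneg _
  have hC : Real.sqrt lam * Real.sqrt (∑ i, (e i) ^ 2) ≤ ∑ k, |y k| := by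
    rw [← Real.sqrt_mul hlam.le]
    have h1 : Real.sqrt (lam * ∑ i, (e i) ^ 2) ≤ Real.sqrt (∑ k, (y k) ^ 2) :=
      Real.sqrt_le_sqrt hL
    have h2 : Real.sqrt (∑ k, (y k) ^ 2) ≤ ∑ k, |y k| := by
      have h3 : ∑ k, (y k) ^ 2 ≤ (∑ k, |y k|) ^ 2 := by
        have := Finset.sum_sq_le_sq_sum_of_nonneg
          (s := (Finset.univ : Finset (Fin m))) (f := fun k => |y k|)
          (fun k _ => abs_nonneg _)
        simpa [sq_abs] using this
      calc Real.sqrt (∑ k, (y k) ^ 2) ≤ Real.sqrt ((∑ k, |y k|) ^ 2) := Real.sqrt_le_sqrt h3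
        _ = ∑ k, |y k| := Real.sqrt_sq hynn
    linarith
  -- Step E: Cauchy-Schwarz
  have hE : ∑ i, e i * w i ≤ ω₀ * Real.sqrt (∑ i, (e i) ^ 2) := by
    have hcs := Real.sum_mul_le_sqrt_mul_sqrt (Finset.univ : Finset (Fin N)) e w
    have hsnn : (0:ℝ) ≤ Real.sqrt (∑ i, (e i) ^ 2) := Real.sqrt_nonneg _
    calc ∑ i, e i * w i ≤ Real.sqrt (∑ i, (e i) ^ 2) * Real.sqrt (∑ i, (w i) ^ 2) := hcs
      _ ≤ Real.sqrt (∑ i, (e i) ^ 2) * ω₀ := by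
          exact mul_le_mul_of_nonneg_left hw hsnn
      _ = ω₀ * Real.sqrt (∑ i, (e i) ^ 2) := mul_comm _ _
  -- combine
  rw [hsplit]
  have hS : Real.sqrt lam * Real.sqrt (∑ i, (e i) ^ 2) - 0.2785 * m / β₂ ≤ ∑ k, y k * T k := by
    linarith
  have h5 := mul_le_mul_of_nonneg_left hS hβ₁.le
  have hc : β₁ * (0.2785 * m / β₂) = 0.2785 * β₁ * m / β₂ := by ring
  nlinarith [h5, hE, hc]
end
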